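/- arXiv:2202.05562 — 5 statements merged into one kernel-verified Lean document; each statement's English description precedes it below -/
import Mathlib

section
/- Let G be a finite simple matching covered graph with μ(G) = 2. Then the maximum degree of G is at most 4: every vertex of G has degree at most 4. -/
/-- A perfect matching of `G`: a set of edges of `G` such that every vertex
lies in exactly one edge of the set. -/
def IsPerfectMatching {V : Type*} (G : SimpleGraph V) (M : Set (Sym2 V)) : Prop :=
  M ⊆ G.edgeSet ∧ ∀ v : V, ∃! e : Sym2 V, e ∈ M ∧ v ∈ e

/-- `c` is a PMValid `k`-edge-colouring of `G`: it colours the edges of `G` with colours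
in `{1, …, k}`, every perfect matching of `G` is monochromatic under `c`, and every
colour class contains a perfect matching. -/
def PMValid {V : Type*} (G : SimpleGraph V) (c : Sym2 V → ℕ) (k : ℕ) : Prop :=
  (∀ e ∈ G.edgeSet, c e ∈ Finset.Icc 1 k) ∧
  (∀ M : Set (Sym2 V), IsPerfectMatching G M → ∀ e ∈ M, ∀ e' ∈ M, c e = c e') ∧
  (∀ i ∈ Finset.Icc 1 k, ∃ M : Set (Sym2 V), IsPerfectMatching G M ∧ ∀ e ∈ M, c e = i)

/-- The matching index `μ(G)`: the largest `k` for which `G` admits a PMValid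
`k`-edge-colouring (`0` if there is none, in particular if `G` has no perfect matching). -/
noncomputable def matchingIndex {V : Type*} (G : SimpleGraph V) : ℕ :=
  sSup {k | ∃ c : Sym2 V → ℕ, PMValid G c k}

/-- `G` is matching covered: every edge lies in some perfect matching. -/
def MatchingCovered {V : Type*} (G : SimpleGraph V) : Prop :=
  ∀ e ∈ G.edgeSet, ∃ M : Set (Sym2 V), IsPerfectMatching G M ∧ e ∈ M

namespace PMAux

variable {V : Type*} {G : SimpleGraph V}

lemma pm_of_invol (p : V → V) (h2 : ∀ x, p (p x) = x) (hadj : ∀ x, G.Adj x (p x)) :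
    IsPerfectMatching G {e | ∃ x, e = s(x, p x)} := by
  constructor
  · rintro e ⟨x, rfl⟩
    exact (hadj x)
  · intro v
    refine ⟨s(v, p v), ⟨⟨v, rfl⟩, by simp⟩, ?_⟩
    rintro e ⟨⟨x, rfl⟩, hv⟩
    rw [Sym2.mem_iff] at hv
    rcases hv with rfl | rfl
    · rfl
    · rw [h2, Sym2.eq_swap]

variable {c : Sym2 V → ℕ} {i j : ℕ}

/-- Monochromaticity of all perfect matchings. -/
def Mono (G : SimpleGraph V) (c : Sym2 V → ℕ) : Prop :=
  ∀ M : Set (Sym2 V), IsPerfectMatching G M → ∀ e ∈ M, ∀ e' ∈ M, c e = c e'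

/-- From a fixpoint-free involution along edges with two edges of different colours,
get a contradiction. -/
lemma no_mixed (hmono : Mono G c) (p : V → V) (h2 : ∀ x, p (p x) = x)
    (hadj : ∀ x, G.Adj x (p x)) (x y : V) (hxy : c s(x, p x) ≠ c s(y, p y)) : False := by
  have hM := pm_of_invol p h2 hadj
  exact hxy (hmono _ hM _ ⟨x, rfl⟩ _ ⟨y, rfl⟩)

/-- A set closed under two perfect matchings of different colours is empty or everything. -/
lemma closed_univ (hmono : Mono G c) (hij : i ≠ j) (p q : V → V)
    (hp2 : ∀ x, p (p x) = x) (hpa : ∀ x, G.Adj x (p x))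
    (hq2 : ∀ x, q (q x) = x) (hqa : ∀ x, G.Adj x (q x))
    (hpc : ∀ x, c s(x, p x) = i) (hqc : ∀ x, c s(x, q x) = j)
    (S : Set V) (hSp : ∀ x ∈ S, p x ∈ S) (hSq : ∀ x ∈ S, q x ∈ S)
    (hS : S.Nonempty) : S = Set.univ := by
  classical
  by_contra hne
  obtain ⟨x0, hx0⟩ := hS
  have : ∃ y, y ∉ S := by
    by_contra h
    push_neg at h
    exact hne (Set.eq_univ_iff_forall.2 h)
  obtain ⟨y0, hy0⟩ := this
  set φ : V → V := fun x => if x ∈ S then p x else q x with hφ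
  have hSqc : ∀ x, x ∉ S → q x ∉ S := by
    intro x hx hqx
    exact hx (by rw [← hq2 x]; exact hSq _ hqx)
  have hφ2 : ∀ x, φ (φ x) = x := by
    intro x
    by_cases hx : x ∈ S
    · simp only [hφ, if_pos hx, if_pos (hSp x hx), hp2]
    · simp only [hφ, if_neg hx, if_neg (hSqc x hx), hq2]
  have hφa : ∀ x, G.Adj x (φ x) := by
    intro x
    by_cases hx : x ∈ S
    · simp only [hφ, if_pos hx]; exact hpa x
    · simp only [hφ, if_neg hx]; exact hqa x
  apply no_mixed hmono φ hφ2 hφa x0 y0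
  simp only [hφ, if_pos hx0, if_neg hy0, hpc, hqc]
  exact hij

section Walk

variable (p q : V → V)

/-- Alternating walk along two matchings. -/
def walk (v : V) : ℕ → V
  | 0 => v
  | (t+1) => if t % 2 = 0 then p (walk v t) else q (walk v t)

lemma walk_succ_even (v : V) {t : ℕ} (h : t % 2 = 0) :
    walk p q v (t + 1) = p (walk p q v t) := by simp [walk, h]

lemma walk_succ_odd (v : V) {t : ℕ} (h : t % 2 = 1) :
    walk p q v (t + 1) = q (walk p q v t) := by simp [walk, h]

variable {p q}
variable (hp2 : ∀ x, p (p x) = x) (hq2 : ∀ x, q (q x) = x)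

include hp2 hq2 in
lemma walk_back {v : V} {a b : ℕ} (hpar : a % 2 = b % 2)
    (h : walk p q v (a + 1) = walk p q v (b + 1)) : walk p q v a = walk p q v b := by
  rcases Nat.mod_two_eq_zero_or_one a with ha | ha
  · rw [walk_succ_even p q v ha, walk_succ_even p q v (hpar ▸ ha)] at h
    have := congrArg p h
    rwa [hp2, hp2] at this
  · rw [walk_succ_odd p q v ha, walk_succ_odd p q v (hpar ▸ ha)] at h
    have := congrArg q h
    rwa [hq2, hq2] at this

include hp2 hq2 in
lemma walk_back_iter {v : V} {a b : ℕ} (k : ℕ) (hpar : a % 2 = b % 2)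
    (h : walk p q v (a + k) = walk p q v (b + k)) : walk p q v a = walk p q v b := by
  induction k with
  | zero => exact h
  | succ k ih =>
    apply ih
    have : (a + k) % 2 = (b + k) % 2 := by omega
    exact walk_back hp2 hq2 this h

include hp2 hq2 in
lemma exists_return [Fintype V] (v : V) :
    ∃ T, 0 < T ∧ T % 2 = 0 ∧ walk p q v T = v := by
  classical
  have hni : ¬ Function.Injective (fun t : ℕ => (walk p q v t, t % 2 = 0)) := by
    intro hinj
    exact not_injective_infinite_finite _ hinj
  rw [Function.not_injective_iff] at hni
  obtain ⟨a, b, heq, hne⟩ := hni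
  simp only [Prod.mk.injEq, eq_iff_iff] at heq
  obtain ⟨heq1, heq2⟩ := heq
  rcases Nat.lt_or_ge a b with hab | hab
  · refine ⟨b - a, by omega, by omega, ?_⟩
    have := walk_back_iter hp2 hq2 a (a := b - a) (b := 0) (v := v) (by omega)
      (by rw [Nat.sub_add_cancel (le_of_lt hab), Nat.zero_add]; exact heq1.symm)
    rwa [walk] at this  -- walk v 0 = v
  · have hab' : b < a := by omega
    refine ⟨a - b, by omega, by omega, ?_⟩
    have := walk_back_iter hp2 hq2 b (a := a - b) (b := 0) (v := v) (by omega)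
      (by rw [Nat.sub_add_cancel (le_of_lt hab'), Nat.zero_add]; exact heq1)
    rwa [walk] at this

end Walk

/-- A cyclic alternating labeling of all vertices: even steps are colour-`i` matching
edges, odd steps are colour-`j` matching edges. -/
structure Cyc (V : Type*) (G : SimpleGraph V) (c : Sym2 V → ℕ) (i j : ℕ) where
  L : ℕ
  g : ℕ → V
  hL : 0 < L
  hLe : L % 2 = 0
  hsurj : ∀ x : V, ∃ t, t < L ∧ g t = x
  hinj : ∀ ⦃a b : ℕ⦄, a < L → b < L → g a = g b → a = b
  hN : ∀ t, t < L → t % 2 = 1 →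
    s(g t, g ((t+1) % L)) ∈ G.edgeSet ∧ c s(g t, g ((t+1) % L)) = j
  hMa : ∀ t, t < L → t % 2 = 0 → s(g t, g (t+1)) ∈ G.edgeSet ∧ c s(g t, g (t+1)) = i
  hmono : Mono G c
  hij : i ≠ j

variable {p q : V → V}

lemma cyc_exists [Fintype V] (hmono : Mono G c) (hij : i ≠ j)
    (hp2 : ∀ x, p (p x) = x) (hpa : ∀ x, G.Adj x (p x))
    (hq2 : ∀ x, q (q x) = x) (hqa : ∀ x, G.Adj x (q x))
    (hpc : ∀ x, c s(x, p x) = i) (hqc : ∀ x, c s(x, q x) = j) (v : V) :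
    ∃ K : Cyc V G c i j, K.g 0 = v ∧ K.g 1 = p v := by
  classical
  have hppt : ∀ x, p x ≠ x := fun x => ((hpa x).ne).symm
  have hqpt : ∀ x, q x ≠ x := fun x => ((hqa x).ne).symm
  have hpq : ∀ x, p x ≠ q x := by
    intro x h
    apply hij
    rw [← hpc x, h, hqc x]
  -- odd-distance points on the walk are distinct
  have hodd : ∀ (k s : ℕ), walk p q v s ≠ walk p q v (s + (2*k+1)) := by
    intro k
    induction k with
    | zero =>
      intro s h
      rcases Nat.mod_two_eq_zero_or_one s with hs | hs
      · rw [show s + (2*0+1) = s + 1 by ring, walk_succ_even p q v hs] at h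
        exact hppt _ h.symm
      · rw [show s + (2*0+1) = s + 1 by ring, walk_succ_odd p q v hs] at h
        exact hqpt _ h.symm
    | succ k ih =>
      intro s h
      rcases Nat.mod_two_eq_zero_or_one s with hs | hs
      · have h2 : s + (2*(k+1)+1) = (s + (2*k+2)) + 1 := by ring
        rw [h2, walk_succ_even p q v (by omega)] at h
        have h3 : walk p q v (s + (2*k+2)) = p (walk p q v s) := by
          have h4 := congrArg p h
          rw [hp2] at h4
          exact h4.symm
        rw [← walk_succ_even p q v hs] at h3
        exact ih (s+1) (by rw [show s + 1 + (2*k+1) = s + (2*k+2) by ring, h3])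
      · have h2 : s + (2*(k+1)+1) = (s + (2*k+2)) + 1 := by ring
        rw [h2, walk_succ_odd p q v (by omega)] at h
        have h3 : walk p q v (s + (2*k+2)) = q (walk p q v s) := by
          have h4 := congrArg q h
          rw [hq2] at h4
          exact h4.symm
        rw [← walk_succ_odd p q v hs] at h3
        exact ih (s+1) (by rw [show s + 1 + (2*k+1) = s + (2*k+2) by ring, h3])
  -- forward propagation of coincidences with equal parity
  have hfwd : ∀ (a b : ℕ), a % 2 = b % 2 → walk p q v a = walk p q v b →
      ∀ r, walk p q v (a + r) = walk p q v (b + r) := by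
    intro a b hpar h r
    induction r with
    | zero => exact h
    | succ r ih =>
      rcases Nat.mod_two_eq_zero_or_one (a + r) with h1 | h1
      · rw [show a + (r+1) = (a+r) + 1 by ring, show b + (r+1) = (b+r)+1 by ring,
          walk_succ_even p q v h1, walk_succ_even p q v (by omega), ih]
      · rw [show a + (r+1) = (a+r) + 1 by ring, show b + (r+1) = (b+r)+1 by ring,
          walk_succ_odd p q v h1, walk_succ_odd p q v (by omega), ih]
  -- minimal even return time
  have hex := exists_return hp2 hq2 v
  haveI : DecidablePred fun T => 0 < T ∧ T % 2 = 0 ∧ walk p q v T = v := Classical.decPred _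
  set L := Nat.find hex with hLdef
  obtain ⟨hL0, hL2, hLv⟩ := Nat.find_spec hex
  have hLmin : ∀ m, m < L → ¬(0 < m ∧ m % 2 = 0 ∧ walk p q v m = v) :=
    fun m hm => Nat.find_min hex hm
  have hinj : ∀ ⦃a b : ℕ⦄, a < L → b < L → walk p q v a = walk p q v b → a = b := by
    intro a b ha hb h
    by_contra hne
    -- wlog a < b
    rcases Nat.lt_or_ge a b with hab | hab
    · rcases Nat.mod_two_eq_zero_or_one (b - a) with hev | hod
      · have := hfwd a b (by omega) h (L - b)
        rw [show b + (L - b) = L by omega, hLv] at this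
        refine hLmin (a + (L - b)) (by omega) ⟨by omega, by omega, ?_⟩
        rw [this]
      · exact hodd ((b - a - 1)/2) a (by rw [show a + (2*((b-a-1)/2)+1) = b by omega]; exact h)
    · have hab' : b < a := by omega
      rcases Nat.mod_two_eq_zero_or_one (a - b) with hev | hod
      · have := hfwd b a (by omega) h.symm (L - a)
        rw [show a + (L - a) = L by omega, hLv] at this
        refine hLmin (b + (L - a)) (by omega) ⟨by omega, by omega, ?_⟩
        rw [this]
      · exact hodd ((a - b - 1)/2) b (by rw [show b + (2*((a-b-1)/2)+1) = a by omega]; exact h.symm)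
  -- surjectivity
  have hsurj : ∀ x : V, ∃ t, t < L ∧ walk p q v t = x := by
    set S : Set V := {x | ∃ t, t < L ∧ walk p q v t = x} with hSdef
    have hSp : ∀ x ∈ S, p x ∈ S := by
      rintro x ⟨t, ht, rfl⟩
      rcases Nat.mod_two_eq_zero_or_one t with h1 | h1
      · exact ⟨t+1, by omega, walk_succ_even p q v h1⟩
      · refine ⟨t-1, by omega, ?_⟩
        have h5 : walk p q v t = p (walk p q v (t-1)) := by
          rw [← walk_succ_even p q v (t := t - 1) (by omega), show t - 1 + 1 = t by omega]
        rw [h5, hp2]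
    have hSq : ∀ x ∈ S, q x ∈ S := by
      rintro x ⟨t, ht, rfl⟩
      rcases Nat.mod_two_eq_zero_or_one t with h1 | h1
      · rcases Nat.eq_zero_or_pos t with rfl | htpos
        · refine ⟨L-1, by omega, ?_⟩
          have : walk p q v L = q (walk p q v (L-1)) := by
            rw [← walk_succ_odd p q v (t := L - 1) (by omega), show L - 1 + 1 = L by omega]
          rw [hLv] at this
          have := congrArg q this
          rw [hq2] at this
          rw [← this]
          rfl
        · refine ⟨t-1, by omega, ?_⟩
          have h5 : walk p q v t = q (walk p q v (t-1)) := by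
            rw [← walk_succ_odd p q v (t := t - 1) (by omega), show t - 1 + 1 = t by omega]
          rw [h5, hq2]
      · rcases Nat.lt_or_ge (t+1) L with h2 | h2
        · exact ⟨t+1, h2, walk_succ_odd p q v h1⟩
        · have ht1 : t + 1 = L := by omega
          refine ⟨0, hL0, ?_⟩
          have : walk p q v (t+1) = q (walk p q v t) := walk_succ_odd p q v h1
          rw [ht1, hLv] at this
          simp only [walk]
          exact this
    have hSuniv : S = Set.univ := by
      apply closed_univ hmono hij p q hp2 hpa hq2 hqa hpc hqc S hSp hSq
      exact ⟨v, 0, hL0, rfl⟩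
    intro x
    have : x ∈ S := by rw [hSuniv]; trivial
    exact this
  -- build the structure
  refine ⟨⟨L, walk p q v, hL0, hL2, hsurj, hinj, ?_, ?_, hmono, hij⟩, rfl, walk_succ_even p q v (t := 0) rfl⟩
  · intro t ht h1
    rcases Nat.lt_or_ge (t+1) L with h2 | h2
    · rw [Nat.mod_eq_of_lt h2, walk_succ_odd p q v h1]
      exact ⟨G.mem_edgeSet.2 (hqa _), hqc _⟩
    · have ht1 : t + 1 = L := by omega
      have : (t+1) % L = 0 := by rw [ht1, Nat.mod_self]
      rw [this]
      have hLq : walk p q v L = q (walk p q v t) := by rw [← ht1]; exact walk_succ_odd p q v h1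
      rw [hLv] at hLq
      have hkey : s(walk p q v t, walk p q v 0) = s(walk p q v t, q (walk p q v t)) := by
        rw [show walk p q v 0 = v from rfl]
        exact congrArg (fun z => s(walk p q v t, z)) hLq
      rw [hkey]
      exact ⟨G.mem_edgeSet.2 (hqa _), hqc _⟩
  · intro t ht h1
    rw [walk_succ_even p q v h1]
    exact ⟨G.mem_edgeSet.2 (hpa _), hpc _⟩

end PMAux
namespace PMAux


/-- A finset with a fixpoint-free involution has even cardinality. -/
lemma even_card_invol : ∀ (A : Finset ℕ), ∀ (σ : ℕ → ℕ), (∀ a ∈ A, σ a ∈ A) →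
    (∀ a ∈ A, σ (σ a) = a) → (∀ a ∈ A, σ a ≠ a) → Even A.card := by
  intro A
  induction A using Finset.strongInduction with
  | _ A ih =>
    intro σ h1 h2 h3
    rcases A.eq_empty_or_nonempty with rfl | ⟨a, ha⟩
    · simp
    · have hin := h1 a ha
      have hne := h3 a ha
      have hsub : ({a, σ a} : Finset ℕ) ⊆ A := by
        intro x hx
        rcases Finset.mem_insert.1 hx with rfl | hx
        · exact ha
        · rcases Finset.mem_singleton.1 hx with rfl; exact hin
      have hss : A \ {a, σ a} ⊂ A := by
        apply Finset.sdiff_ssubset hsub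
        exact ⟨a, Finset.mem_insert_self _ _⟩
      have key : Even (A \ {a, σ a}).card := by
        apply ih _ hss σ
        · intro b hb
          rw [Finset.mem_sdiff] at hb ⊢
          obtain ⟨hbA, hbn⟩ := hb
          simp only [Finset.mem_insert, Finset.mem_singleton, not_or] at hbn
          refine ⟨h1 b hbA, ?_⟩
          simp only [Finset.mem_insert, Finset.mem_singleton, not_or]
          constructor
          · intro h
            exact hbn.2 (by rw [← h, h2 b hbA])
          · intro h
            exact hbn.1 (by have := congrArg σ h; rwa [h2 b hbA, h2 a ha] at this)
        · intro b hb; exact h2 b (Finset.mem_sdiff.1 hb).1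
        · intro b hb; exact h3 b (Finset.mem_sdiff.1 hb).1
      have hcard : A.card = (A \ {a, σ a}).card + 2 := by
        rw [Finset.card_sdiff_of_subset hsub]
        have : ({a, σ a} : Finset ℕ).card = 2 := by
          rw [Finset.card_insert_of_notMem (by simpa using hne.symm), Finset.card_singleton]
        have h22 := Finset.card_le_card hsub
        rw [this] at h22 ⊢
        omega
      obtain ⟨k, hk⟩ := key
      exact ⟨k + 1, by omega⟩

variable {V : Type*} {G : SimpleGraph V}

/-- Extract a partner function from a perfect matching. -/
lemma exists_pfun {M : Set (Sym2 V)} (hM : IsPerfectMatching G M) :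
    ∃ p : V → V, (∀ x, p (p x) = x) ∧ (∀ x, G.Adj x (p x)) ∧ (∀ x, s(x, p x) ∈ M) ∧
      (∀ e ∈ M, ∀ x ∈ e, e = s(x, p x)) := by
  classical
  have hch : ∀ x : V, ∃ y : V, s(x, y) ∈ M := by
    intro x
    obtain ⟨e, ⟨heM, hex⟩, _⟩ := hM.2 x
    obtain ⟨y, rfl⟩ := (Sym2.mem_iff_exists).1 hex
    exact ⟨y, heM⟩
  choose p hp using hch
  have huniq : ∀ e ∈ M, ∀ x ∈ e, e = s(x, p x) := by
    intro e heM x hxe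
    obtain ⟨e', he', hu⟩ := hM.2 x
    have h1 : e = e' := hu e ⟨heM, hxe⟩
    have h2 : s(x, p x) = e' := hu _ ⟨hp x, by simp⟩
    rw [h1, ← h2]
  have hadj : ∀ x, G.Adj x (p x) := by
    intro x
    exact (SimpleGraph.mem_edgeSet G).1 (hM.1 (hp x))
  refine ⟨p, ?_, hadj, hp, huniq⟩
  intro x
  have h1 : s(x, p x) ∈ M := hp x
  have h2 := huniq _ h1 (p x) (by simp)
  rw [Sym2.eq_swap] at h2
  exact Sym2.congr_right.1 h2.symm

end PMAux

namespace PMAux.Cyc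

variable {V : Type*} {G : SimpleGraph V} {c : Sym2 V → ℕ} {i j : ℕ}

noncomputable def pos (K : Cyc V G c i j) (x : V) : ℕ := (K.hsurj x).choose

lemma pos_lt (K : Cyc V G c i j) (x : V) : K.pos x < K.L := (K.hsurj x).choose_spec.1

lemma g_pos (K : Cyc V G c i j) (x : V) : K.g (K.pos x) = x := (K.hsurj x).choose_spec.2

lemma pos_g (K : Cyc V G c i j) {t : ℕ} (ht : t < K.L) : K.pos (K.g t) = t :=
  K.hinj (K.pos_lt _) ht (K.g_pos _)

lemma g_ne (K : Cyc V G c i j) {a b : ℕ} (ha : a < K.L) (hb : b < K.L) (hne : a ≠ b) :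
    K.g a ≠ K.g b := fun h => hne (K.hinj ha hb h)

lemma mod_parity (K : Cyc V G c i j) (a : ℕ) : (a % K.L) % 2 = a % 2 :=
  Nat.mod_mod_of_dvd a (Nat.dvd_of_mod_eq_zero K.hLe)

/-- The key contradiction machine: an explicit fixpoint-free involution on positions whose
edges are graph edges, containing two edges of different colours, is impossible. -/
lemma mix (K : Cyc V G c i j) (ψ : ℕ → ℕ)
    (hψlt : ∀ t, t < K.L → ψ t < K.L)
    (hψ2 : ∀ t, t < K.L → ψ (ψ t) = t)
    (hψne : ∀ t, t < K.L → ψ t ≠ t)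
    (hψe : ∀ t, t < K.L → s(K.g t, K.g (ψ t)) ∈ G.edgeSet)
    (t1 t2 : ℕ) (h1 : t1 < K.L) (h2 : t2 < K.L)
    (hcol : c s(K.g t1, K.g (ψ t1)) ≠ c s(K.g t2, K.g (ψ t2))) : False := by
  set φ : V → V := fun x => K.g (ψ (K.pos x)) with hφdef
  have hφ2 : ∀ x, φ (φ x) = x := by
    intro x
    have hx : K.pos x < K.L := K.pos_lt x
    simp only [hφdef]
    rw [K.pos_g (hψlt _ hx), hψ2 _ hx, K.g_pos]
  have hφa : ∀ x, G.Adj x (φ x) := by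
    intro x
    have hx : K.pos x < K.L := K.pos_lt x
    have := hψe _ hx
    rw [K.g_pos] at this  -- does it rewrite? s(K.g (K.pos x), ...) → s(x, ...)
    exact G.mem_edgeSet.1 this
  apply no_mixed K.hmono φ hφ2 hφa (K.g t1) (K.g t2)
  simp only [hφdef]
  rw [K.pos_g h1, K.pos_g h2]
  exact hcol

/-- Rotation of the cyclic labeling by an even amount. -/
def rot (K : Cyc V G c i j) (r : ℕ) (hr : r % 2 = 0) : Cyc V G c i j where
  L := K.L
  g := fun t => K.g ((t + r) % K.L)
  hL := K.hL
  hLe := K.hLe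
  hsurj := by
    intro x
    obtain ⟨t0, ht0, hgt⟩ := K.hsurj x
    refine ⟨(t0 + (K.L - r % K.L)) % K.L, Nat.mod_lt _ K.hL, ?_⟩
    have harith : ((t0 + (K.L - r % K.L)) % K.L + r) % K.L = t0 := by
      rw [Nat.mod_add_mod]
      have hd := Nat.div_add_mod r K.L
      have hm : r % K.L < K.L := Nat.mod_lt _ K.hL
      have h5 : t0 + (K.L - r % K.L) + r = t0 + K.L * (r / K.L) + K.L := by omega
      rw [h5, show t0 + K.L * (r / K.L) + K.L = t0 + K.L * (r / K.L + 1) by ring,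
        Nat.add_mul_mod_self_left, Nat.mod_eq_of_lt ht0]
    rw [harith, hgt]
  hinj := by
    intro a b ha hb h
    have h2 := K.hinj (Nat.mod_lt _ K.hL) (Nat.mod_lt _ K.hL) h
    have h3 : (a + r) % K.L = (b + r) % K.L := h2
    have h4 : a % K.L = b % K.L := Nat.ModEq.add_right_cancel' r h3
    rwa [Nat.mod_eq_of_lt ha, Nat.mod_eq_of_lt hb] at h4
  hN := by
    intro t ht h1
    have ht' : (t + r) % K.L < K.L := Nat.mod_lt _ K.hL
    have hpar : ((t + r) % K.L) % 2 = 1 := by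
      rw [K.mod_parity]; omega
    have hkey := K.hN _ ht' hpar
    have he1 : ((t + 1) % K.L + r) % K.L = ((t + r) % K.L + 1) % K.L := by
      rw [Nat.mod_add_mod, Nat.mod_add_mod]
      congr 1
      omega
    rw [he1]
    exact hkey
  hMa := by
    intro t ht h1
    have ht' : (t + r) % K.L < K.L := Nat.mod_lt _ K.hL
    have hpar : ((t + r) % K.L) % 2 = 0 := by
      rw [K.mod_parity]; omega
    have hkey := K.hMa _ ht' hpar
    have hlt : (t + r) % K.L + 1 < K.L := by
      have := K.hLe
      omega
    have he1 : (t + 1 + r) % K.L = (t + r) % K.L + 1 := by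
      conv_lhs => rw [show t + 1 + r = (t + r) + 1 by ring]
      rw [← Nat.mod_add_mod, Nat.mod_eq_of_lt hlt]
    rw [he1]
    exact hkey
  hmono := K.hmono
  hij := K.hij

lemma rot_g (K : Cyc V G c i j) (r : ℕ) (hr : r % 2 = 0) (t : ℕ) :
    (K.rot r hr).g t = K.g ((t + r) % K.L) := rfl

lemma rot_L (K : Cyc V G c i j) (r : ℕ) (hr : r % 2 = 0) : (K.rot r hr).L = K.L := rfl

lemma rot_g_eq (K : Cyc V G c i j) {r : ℕ} (hr : r % 2 = 0) {t u : ℕ} (hu : u < K.L)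
    (ht : t + r = u ∨ t + r = u + K.L) : (K.rot r hr).g t = K.g u := by
  rw [rot_g]
  rcases ht with h | h
  · rw [h, Nat.mod_eq_of_lt hu]
  · rw [h, Nat.add_mod_right, Nat.mod_eq_of_lt hu]

end PMAux.Cyc

namespace PMAux.Cyc

variable {V : Type*} {G : SimpleGraph V} {c : Sym2 V → ℕ} {i j : ℕ}

lemma nzone_edge (K : Cyc V G c i j) {t : ℕ} (h1 : t % 2 = 1) (h2 : t + 1 < K.L) :
    s(K.g t, K.g (t+1)) ∈ G.edgeSet ∧ c s(K.g t, K.g (t+1)) = j := by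
  have := K.hN t (by omega) h1
  rwa [Nat.mod_eq_of_lt h2] at this

lemma wrap_edge (K : Cyc V G c i j) :
    s(K.g (K.L - 1), K.g 0) ∈ G.edgeSet ∧ c s(K.g (K.L - 1), K.g 0) = j := by
  have hL2 : 2 ≤ K.L := by have := K.hLe; have := K.hL; omega
  have := K.hN (K.L - 1) (by omega) (by have := K.hLe; omega)
  rwa [show (K.L - 1 + 1) % K.L = 0 by
    rw [show K.L - 1 + 1 = K.L by omega, Nat.mod_self]] at this

/-- Normalized parity lemma: a colour-`i` edge from position 0 to an odd position
must go to position 1. -/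
lemma F1_0 (K : Cyc V G c i j) {b : ℕ} (hb0 : 0 < b) (hbL : b < K.L) (hodd : b % 2 = 1)
    (he : s(K.g 0, K.g b) ∈ G.edgeSet) (hc : c s(K.g 0, K.g b) = i) : b = 1 := by
  by_contra hne
  have hb3 : 3 ≤ b := by omega
  have hL2 : 2 ≤ K.L := by have := K.hLe; have := K.hL; omega
  rcases eq_or_lt_of_le (show b ≤ K.L - 1 by omega) with hbtop | hblt
  · -- b = L - 1 : the edge is the wrap N-edge, colour j
    have hw := K.wrap_edge
    rw [← hbtop] at hw
    rw [Sym2.eq_swap] at hc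
    rw [hw.2] at hc
    exact K.hij hc.symm
  · -- proper chord: build the mixed matching
    have hbL3 : b + 1 < K.L := by omega
    set ψ : ℕ → ℕ := fun t => if t = 0 then b else if t = b then 0 else
      if t < b then (if t % 2 = 1 then t + 1 else t - 1)
      else (if t % 2 = 0 then t + 1 else t - 1) with hψdef
    have hψ0 : ψ 0 = b := by simp [hψdef]
    have hψb : ψ b = 0 := by
      simp only [hψdef]
      rw [if_neg (by omega)]
      simp
    have hψlowodd : ∀ t, 0 < t → t < b → t % 2 = 1 → ψ t = t + 1 := by
      intro t h1 h2 h3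
      simp only [hψdef]
      rw [if_neg (by omega), if_neg (by omega), if_pos h2, if_pos h3]
    have hψloweven : ∀ t, 0 < t → t < b → t % 2 = 0 → ψ t = t - 1 := by
      intro t h1 h2 h3
      simp only [hψdef]
      rw [if_neg (by omega), if_neg (by omega), if_pos h2, if_neg (by omega)]
    have hψhigheven : ∀ t, b < t → t % 2 = 0 → ψ t = t + 1 := by
      intro t h1 h3
      simp only [hψdef]
      rw [if_neg (by omega), if_neg (by omega), if_neg (by omega), if_pos h3]
    have hψhighodd : ∀ t, b < t → t % 2 = 1 → ψ t = t - 1 := by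
      intro t h1 h3
      simp only [hψdef]
      rw [if_neg (by omega), if_neg (by omega), if_neg (by omega), if_neg (by omega)]
    have key : ∀ t, t < K.L → ψ t < K.L ∧ ψ (ψ t) = t ∧ ψ t ≠ t ∧
        s(K.g t, K.g (ψ t)) ∈ G.edgeSet := by
      intro t ht
      by_cases h0 : t = 0
      · subst h0
        rw [hψ0, hψb]
        exact ⟨hbL, rfl, by omega, he⟩
      by_cases hB : t = b
      · subst hB
        rw [hψb, hψ0]
        refine ⟨by omega, rfl, by omega, ?_⟩
        rw [Sym2.eq_swap]; exact he
      rcases Nat.lt_or_ge t b with hlt | hgt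
      · rcases Nat.mod_two_eq_zero_or_one t with hpar | hpar
        · -- low even
          have h1 : ψ t = t - 1 := hψloweven t (by omega) hlt hpar
          have h2 : ψ (t-1) = t := by
            rw [hψlowodd (t-1) (by omega) (by omega) (by omega)]; omega
          refine ⟨by omega, by rw [h1, h2], by omega, ?_⟩
          rw [h1, Sym2.eq_swap]
          have := (K.nzone_edge (t := t - 1) (by omega) (by omega)).1
          rwa [show t - 1 + 1 = t by omega] at this
        · -- low odd
          have h1 : ψ t = t + 1 := hψlowodd t (by omega) hlt hpar
          have ht1b : t + 1 < b := by omega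
          have h2 : ψ (t+1) = t := by
            rw [hψloweven (t+1) (by omega) ht1b (by omega)]; omega
          refine ⟨by omega, by rw [h1, h2], by omega, ?_⟩
          rw [h1]
          exact (K.nzone_edge hpar (by omega)).1
      · have hgt' : b < t := by omega
        rcases Nat.mod_two_eq_zero_or_one t with hpar | hpar
        · -- high even
          have h1 : ψ t = t + 1 := hψhigheven t hgt' hpar
          have h2 : ψ (t+1) = t := by
            rw [hψhighodd (t+1) (by omega) (by omega)]; omega
          have htL : t + 1 < K.L := by have := K.hLe; omega
          refine ⟨by omega, by rw [h1, h2], by omega, ?_⟩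
          rw [h1]
          exact (K.hMa t (by omega) hpar).1
        · -- high odd
          have h1 : ψ t = t - 1 := hψhighodd t hgt' hpar
          have h2 : ψ (t-1) = t := by
            rw [hψhigheven (t-1) (by omega) (by omega)]; omega
          refine ⟨by omega, by rw [h1, h2], by omega, ?_⟩
          rw [h1, Sym2.eq_swap]
          have := (K.hMa (t-1) (by omega) (by omega)).1
          rwa [show t - 1 + 1 = t by omega] at this
    apply K.mix ψ (fun t ht => (key t ht).1) (fun t ht => (key t ht).2.1)
      (fun t ht => (key t ht).2.2.1) (fun t ht => (key t ht).2.2.2) 0 1 K.hL (by omega)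
    rw [hψ0, hψlowodd 1 (by omega) (by omega) (by omega)]
    have hN12 := (K.nzone_edge (t := 1) (by omega) (by omega)).2
    rw [hc, hN12]
    exact K.hij

/-- Any colour-`i` edge joins positions of equal parity, or is a short (Ma) edge. -/
lemma chord_parity (K : Cyc V G c i j) {a b : ℕ} (ha : a < K.L) (hb : b < K.L) (hne : a ≠ b)
    (he : s(K.g a, K.g b) ∈ G.edgeSet) (hc : c s(K.g a, K.g b) = i) :
    a % 2 = b % 2 ∨ (b = a + 1 ∧ a % 2 = 0) ∨ (a = b + 1 ∧ b % 2 = 0) := by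
  rcases Nat.mod_two_eq_zero_or_one a with hpa | hpa <;>
    rcases Nat.mod_two_eq_zero_or_one b with hpb | hpb
  · left; omega
  · -- a even, b odd: rotate by a
    right; left
    set K' := K.rot a hpa with hK'
    set b' := if a ≤ b then b - a else b + K.L - a with hb'def
    have hb'L : b' < K.L := by simp only [hb'def]; split <;> omega
    have hb'0 : 0 < b' := by simp only [hb'def]; split <;> omega
    have hb'odd : b' % 2 = 1 := by
      have := K.hLe
      simp only [hb'def]; split <;> omega
    have hg0 : K'.g 0 = K.g a := K.rot_g_eq hpa ha (by omega)
    have hgb : K'.g b' = K.g b := by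
      apply K.rot_g_eq hpa hb
      simp only [hb'def]; split <;> omega
    have := K'.F1_0 hb'0 (by rw [show K'.L = K.L from rfl]; exact hb'L) hb'odd
      (by rw [hg0, hgb]; exact he) (by rw [hg0, hgb]; exact hc)
    -- b' = 1
    constructor
    · simp only [hb'def] at this
      by_cases hab : a ≤ b
      · rw [if_pos hab] at this; omega
      · rw [if_neg hab] at this
        -- b + L - a = 1 with a even < L, b odd: forces a = L - 1 + b, impossible parity
        have := K.hLe
        omega
    · exact hpa
  · -- a odd, b even: symmetric
    right; right
    set K' := K.rot b hpb with hK'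
    set a' := if b ≤ a then a - b else a + K.L - b with ha'def
    have ha'L : a' < K.L := by simp only [ha'def]; split <;> omega
    have ha'0 : 0 < a' := by simp only [ha'def]; split <;> omega
    have ha'odd : a' % 2 = 1 := by
      have := K.hLe
      simp only [ha'def]; split <;> omega
    have hg0 : K'.g 0 = K.g b := K.rot_g_eq hpb hb (by omega)
    have hga : K'.g a' = K.g a := by
      apply K.rot_g_eq hpb ha
      simp only [ha'def]; split <;> omega
    have := K'.F1_0 ha'0 (by rw [show K'.L = K.L from rfl]; exact ha'L) ha'odd
      (by rw [hg0, hga, Sym2.eq_swap]; exact he) (by rw [hg0, hga, Sym2.eq_swap]; exact hc)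
    constructor
    · simp only [ha'def] at this
      by_cases hab : b ≤ a
      · rw [if_pos hab] at this; omega
      · rw [if_neg hab] at this
        have := K.hLe
        omega
    · exact hpb
  · left; omega

end PMAux.Cyc

namespace PMAux.Cyc

variable {V : Type*} {G : SimpleGraph V} {c : Sym2 V → ℕ} {i j : ℕ}

/-- Normalized crossing lemma: an even colour-`i` chord `{0,b}` and an odd colour-`i`
chord `{a',b'}` with `0 < a' < b < b'` force `a' = 1` and `b' = b + 1`. -/
lemma CL0 (K : Cyc V G c i j) {b a' b' : ℕ} (h1 : 0 < a') (h2 : a' < b) (h3 : b < b')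
    (h4 : b' < K.L) (hbe : b % 2 = 0) (ha'o : a' % 2 = 1) (hb'o : b' % 2 = 1)
    (he1 : s(K.g 0, K.g b) ∈ G.edgeSet) (hc1 : c s(K.g 0, K.g b) = i)
    (he2 : s(K.g a', K.g b') ∈ G.edgeSet) (hc2 : c s(K.g a', K.g b') = i) :
    a' = 1 ∧ b' = b + 1 := by
  by_contra hccl
  have hcase : 3 ≤ a' ∨ b + 3 ≤ b' := by omega
  have hLe := K.hLe
  have hL2 : 2 ≤ K.L := by have := K.hL; omega
  set ψ : ℕ → ℕ := fun t =>
    if t = 0 then b else if t = b then 0 else if t = a' then b' else if t = b' then a' else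
    if t < a' then (if t % 2 = 1 then t+1 else t-1)
    else if t < b then (if t % 2 = 0 then t+1 else t-1)
    else if t < b' then (if t % 2 = 1 then t+1 else t-1)
    else (if t % 2 = 0 then t+1 else t-1) with hψdef
  have hψ0 : ψ 0 = b := by simp [hψdef]
  have hψb : ψ b = 0 := by
    simp only [hψdef]; rw [if_neg (by omega)]; simp
  have hψa' : ψ a' = b' := by
    simp only [hψdef]; rw [if_neg (by omega), if_neg (by omega)]; simp
  have hψb' : ψ b' = a' := by
    simp only [hψdef]; rw [if_neg (by omega), if_neg (by omega), if_neg (by omega)]; simp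
  have hz1 : ∀ t, 0 < t → t < a' → ψ t = (if t % 2 = 1 then t+1 else t-1) := by
    intro t ht1 ht2
    simp only [hψdef]
    rw [if_neg (by omega), if_neg (by omega), if_neg (by omega), if_neg (by omega), if_pos ht2]
  have hz2 : ∀ t, a' < t → t < b → ψ t = (if t % 2 = 0 then t+1 else t-1) := by
    intro t ht1 ht2
    simp only [hψdef]
    rw [if_neg (by omega), if_neg (by omega), if_neg (by omega), if_neg (by omega),
      if_neg (by omega), if_pos ht2]
  have hz3 : ∀ t, b < t → t < b' → ψ t = (if t % 2 = 1 then t+1 else t-1) := by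
    intro t ht1 ht2
    simp only [hψdef]
    rw [if_neg (by omega), if_neg (by omega), if_neg (by omega), if_neg (by omega),
      if_neg (by omega), if_neg (by omega), if_pos ht2]
  have hz4 : ∀ t, b' < t → ψ t = (if t % 2 = 0 then t+1 else t-1) := by
    intro t ht1
    simp only [hψdef]
    rw [if_neg (by omega), if_neg (by omega), if_neg (by omega), if_neg (by omega),
      if_neg (by omega), if_neg (by omega), if_neg (by omega)]
  have key : ∀ t, t < K.L → ψ t < K.L ∧ ψ (ψ t) = t ∧ ψ t ≠ t ∧
      s(K.g t, K.g (ψ t)) ∈ G.edgeSet := by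
    intro t ht
    by_cases e0 : t = 0
    · subst e0; rw [hψ0, hψb]; exact ⟨by omega, rfl, by omega, he1⟩
    by_cases eb : t = b
    · subst eb; rw [hψb, hψ0]
      exact ⟨by omega, rfl, by omega, by rw [Sym2.eq_swap]; exact he1⟩
    by_cases ea : t = a'
    · subst ea; rw [hψa', hψb']; exact ⟨by omega, rfl, by omega, he2⟩
    by_cases eb' : t = b'
    · subst eb'; rw [hψb', hψa']
      exact ⟨by omega, rfl, by omega, by rw [Sym2.eq_swap]; exact he2⟩
    rcases Nat.lt_or_ge t a' with hr1 | hr1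
    · -- zone 1 : N pairs
      have h5 := hz1 t (by omega) hr1
      rcases Nat.mod_two_eq_zero_or_one t with hpar | hpar
      · rw [if_neg (by omega)] at h5
        have h6 : ψ (t-1) = t := by rw [hz1 (t-1) (by omega) (by omega), if_pos (by omega)]; omega
        refine ⟨by omega, by rw [h5, h6], by omega, ?_⟩
        rw [h5, Sym2.eq_swap]
        have := (K.nzone_edge (t := t-1) (by omega) (by omega)).1
        rwa [show t - 1 + 1 = t by omega] at this
      · rw [if_pos hpar] at h5
        have h6 : ψ (t+1) = t := by rw [hz1 (t+1) (by omega) (by omega), if_neg (by omega)]; omega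
        refine ⟨by omega, by rw [h5, h6], by omega, ?_⟩
        rw [h5]
        exact (K.nzone_edge hpar (by omega)).1
    rcases Nat.lt_or_ge t b with hr2 | hr2
    · -- zone 2 : Ma pairs
      have h5 := hz2 t (by omega) hr2
      rcases Nat.mod_two_eq_zero_or_one t with hpar | hpar
      · rw [if_pos hpar] at h5
        have h6 : ψ (t+1) = t := by rw [hz2 (t+1) (by omega) (by omega), if_neg (by omega)]; omega
        refine ⟨by omega, by rw [h5, h6], by omega, ?_⟩
        rw [h5]
        exact (K.hMa t (by omega) hpar).1
      · rw [if_neg (by omega)] at h5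
        have h6 : ψ (t-1) = t := by rw [hz2 (t-1) (by omega) (by omega), if_pos (by omega)]; omega
        refine ⟨by omega, by rw [h5, h6], by omega, ?_⟩
        rw [h5, Sym2.eq_swap]
        have := (K.hMa (t-1) (by omega) (by omega)).1
        rwa [show t - 1 + 1 = t by omega] at this
    rcases Nat.lt_or_ge t b' with hr3 | hr3
    · -- zone 3 : N pairs
      have h5 := hz3 t (by omega) hr3
      rcases Nat.mod_two_eq_zero_or_one t with hpar | hpar
      · rw [if_neg (by omega)] at h5
        have h6 : ψ (t-1) = t := by rw [hz3 (t-1) (by omega) (by omega), if_pos (by omega)]; omega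
        refine ⟨by omega, by rw [h5, h6], by omega, ?_⟩
        rw [h5, Sym2.eq_swap]
        have := (K.nzone_edge (t := t-1) (by omega) (by omega)).1
        rwa [show t - 1 + 1 = t by omega] at this
      · rw [if_pos hpar] at h5
        have h6 : ψ (t+1) = t := by rw [hz3 (t+1) (by omega) (by omega), if_neg (by omega)]; omega
        refine ⟨by omega, by rw [h5, h6], by omega, ?_⟩
        rw [h5]
        exact (K.nzone_edge hpar (by omega)).1
    · -- zone 4 : Ma pairs
      have h5 := hz4 t (by omega)
      rcases Nat.mod_two_eq_zero_or_one t with hpar | hpar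
      · rw [if_pos hpar] at h5
        have h6 : ψ (t+1) = t := by rw [hz4 (t+1) (by omega), if_neg (by omega)]; omega
        refine ⟨by omega, by rw [h5, h6], by omega, ?_⟩
        rw [h5]
        exact (K.hMa t (by omega) hpar).1
      · rw [if_neg (by omega)] at h5
        have h6 : ψ (t-1) = t := by rw [hz4 (t-1) (by omega), if_pos (by omega)]; omega
        refine ⟨by omega, by rw [h5, h6], by omega, ?_⟩
        rw [h5, Sym2.eq_swap]
        have := (K.hMa (t-1) (by omega) (by omega)).1
        rwa [show t - 1 + 1 = t by omega] at this
  rcases hcase with hA | hB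
  · apply K.mix ψ (fun t ht => (key t ht).1) (fun t ht => (key t ht).2.1)
      (fun t ht => (key t ht).2.2.1) (fun t ht => (key t ht).2.2.2) 0 1 K.hL (by omega)
    rw [hψ0, show ψ 1 = 2 by rw [hz1 1 (by omega) (by omega), if_pos (by omega)]]
    rw [hc1, (K.nzone_edge (t := 1) (by omega) (by omega)).2]
    exact K.hij
  · apply K.mix ψ (fun t ht => (key t ht).1) (fun t ht => (key t ht).2.1)
      (fun t ht => (key t ht).2.2.1) (fun t ht => (key t ht).2.2.2) 0 (b+1) K.hL (by omega)
    rw [hψ0, show ψ (b+1) = b+2 by rw [hz3 (b+1) (by omega) (by omega), if_pos (by omega)]]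
    rw [hc1, (K.nzone_edge (t := b+1) (by omega) (by omega)).2]
    exact K.hij

/-- Circular crossing lemma: even colour-`i` chord `{x',y'}`, odd colour-`i` chord `{u,w}`
with `u` strictly inside `(x',y')` and `w` strictly outside. Then `u = x'+1`, `w = y'+1`. -/
lemma cross_eo (K : Cyc V G c i j) {x' y' u w : ℕ} (hx'e : x' % 2 = 0) (hy'e : y' % 2 = 0)
    (hord : x' < y') (hy'L : y' < K.L) (hu1 : x' < u) (hu2 : u < y')
    (hw : w < x' ∨ (y' < w ∧ w < K.L)) (huo : u % 2 = 1) (hwo : w % 2 = 1)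
    (hee : s(K.g x', K.g y') ∈ G.edgeSet) (hce : c s(K.g x', K.g y') = i)
    (heo : s(K.g u, K.g w) ∈ G.edgeSet) (hco : c s(K.g u, K.g w) = i) :
    u = x' + 1 ∧ w = y' + 1 := by
  set K' := K.rot x' hx'e with hK'
  have hL' : K'.L = K.L := rfl
  have hgx' : K'.g 0 = K.g x' := K.rot_g_eq hx'e (by omega) (by omega)
  have hgy' : K'.g (y' - x') = K.g y' := K.rot_g_eq hx'e (by omega) (by omega)
  have hgu : K'.g (u - x') = K.g u := K.rot_g_eq hx'e (by omega) (by omega)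
  rcases hw with hwlt | ⟨hwgt, hwL⟩
  · -- w before x' : wrapped position; conclusion is impossible, derive False
    exfalso
    have hgw : K'.g (w + K.L - x') = K.g w := by
      apply K.rot_g_eq hx'e (by omega)
      right; omega
    have := K'.CL0 (b := y' - x') (a' := u - x') (b' := w + K.L - x')
      (by omega) (by omega) (by omega) (by rw [hL']; omega)
      (by omega) (by omega) (by have := K.hLe; omega)
      (by rw [hgx', hgy']; exact hee) (by rw [hgx', hgy']; exact hce)
      (by rw [hgu, hgw]; exact heo) (by rw [hgu, hgw]; exact hco)
    omega
  · have hgw : K'.g (w - x') = K.g w := K.rot_g_eq hx'e (by omega) (by omega)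
    have := K'.CL0 (b := y' - x') (a' := u - x') (b' := w - x')
      (by omega) (by omega) (by omega) (by rw [hL']; omega)
      (by omega) (by omega) (by omega)
      (by rw [hgx', hgy']; exact hee) (by rw [hgx', hgy']; exact hce)
      (by rw [hgu, hgw]; exact heo) (by rw [hgu, hgw]; exact hco)
    omega

end PMAux.Cyc

namespace PMAux.Cyc

variable {V : Type*} {G : SimpleGraph V} {c : Sym2 V → ℕ} {i j : ℕ}

/-- No perfect matching inside colour `i` can contain two crossing chords on even
positions.  Chords `{0,y}` and `{x',y'}` with `0 < x' < y < y' < L`, all even. -/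
lemma EE : ∀ (n : ℕ) (K : Cyc V G c i j) (P : V → V),
    (∀ x, P (P x) = x) → (∀ x, G.Adj x (P x)) → (∀ x, c s(x, P x) = i) →
    ∀ x' y y' : ℕ, x' ≤ n → 0 < x' → x' < y → y < y' → y' < K.L →
    x' % 2 = 0 → y % 2 = 0 → y' % 2 = 0 →
    P (K.g 0) = K.g y → P (K.g x') = K.g y' → False := by
  intro n
  induction n using Nat.strong_induction_on with
  | _ n ih =>
    intro K P hP2 hPa hPc x' y y' hxn h0x hxy hyy hy'L hx'e hye hy'e hch1 hch2
    have hyL : y < K.L := by omega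
    have hx'L : x' < K.L := by omega
    have hee : s(K.g 0, K.g y) ∈ G.edgeSet := by
      rw [← hch1]; exact G.mem_edgeSet.2 (by exact (hPa (K.g 0)))
    have hce : c s(K.g 0, K.g y) = i := by rw [← hch1]; exact hPc _
    have hee2 : s(K.g x', K.g y') ∈ G.edgeSet := by
      rw [← hch2]; exact G.mem_edgeSet.2 (by exact (hPa (K.g x')))
    have hce2 : c s(K.g x', K.g y') = i := by rw [← hch2]; exact hPc _
    set A : Finset ℕ := Finset.Ioo 0 x' with hAdef
    set σ : ℕ → ℕ := fun r => K.pos (P (K.g r)) with hσdef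
    have hclos : ∀ r ∈ A, σ r ∈ A := by
      intro r hr
      rw [hAdef, Finset.mem_Ioo] at hr
      obtain ⟨hr0, hrx⟩ := hr
      have hrL : r < K.L := by omega
      set s' := σ r with hs'def
      have hsL : s' < K.L := K.pos_lt _
      have hgs : K.g s' = P (K.g r) := K.g_pos _
      have hsr : s' ≠ r := by
        intro h
        rw [h] at hgs
        exact (hPa (K.g r)).ne (by rw [← hgs])
      have hs0 : s' ≠ 0 := by
        intro h
        rw [h] at hgs
        have h7 := congrArg P hgs
        rw [hP2, hch1] at h7
        have := K.hinj hyL hrL h7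
        omega
      have hsy : s' ≠ y := by
        intro h
        rw [h, ← hch1] at hgs
        have h7 := congrArg P hgs
        rw [hP2, hP2] at h7
        have := K.hinj (by omega : (0:ℕ) < K.L) hrL h7
        omega
      have hsx' : s' ≠ x' := by
        intro h
        rw [h] at hgs
        have h7 := congrArg P hgs
        rw [hP2, hch2] at h7
        have := K.hinj (by omega : y' < K.L) hrL h7
        omega
      have hsy' : s' ≠ y' := by
        intro h
        rw [h, ← hch2] at hgs
        have h7 := congrArg P hgs
        rw [hP2, hP2] at h7
        have := K.hinj hx'L hrL h7
        omega
      have hedge : s(K.g r, K.g s') ∈ G.edgeSet := by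
        rw [hgs]; exact G.mem_edgeSet.2 (by exact hPa (K.g r))
      have hcol : c s(K.g r, K.g s') = i := by rw [hgs]; exact hPc _
      rw [hAdef, Finset.mem_Ioo]
      rcases K.chord_parity hrL hsL (fun h => hsr h.symm) hedge hcol with hpar | ⟨hadj, hre⟩ | ⟨hadj, hse⟩
      · -- same parity chord
        rcases Nat.mod_two_eq_zero_or_one r with hre | hro
        · -- both even
          rcases Nat.lt_or_ge s' x' with hlt | hge
          · exact ⟨by omega, hlt⟩
          have hgx : x' < s' := by omega
          exfalso
          rcases Nat.lt_or_ge s' y with hsly | hsgy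
          · -- new rotated instance: chords {r,s'} and {x',y'}
            set K' := K.rot r hre with hK'
            have hg0' : K'.g 0 = K.g r := K.rot_g_eq hre hrL (by omega)
            have hgs' : K'.g (s' - r) = K.g s' := K.rot_g_eq hre hsL (by omega)
            have hgx'' : K'.g (x' - r) = K.g x' := K.rot_g_eq hre hx'L (by omega)
            have hgy'' : K'.g (y' - r) = K.g y' := K.rot_g_eq hre (by omega) (by omega)
            exact ih (x' - r) (by omega) K' P hP2 hPa hPc (x' - r) (s' - r) (y' - r)
              (le_refl _) (by omega) (by omega) (by omega)
              (by rw [show K'.L = K.L from rfl]; omega)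
              (by omega) (by omega) (by omega)
              (by rw [hg0', hgs']; exact hgs.symm)
              (by rw [hgx'', hgy'']; exact hch2)
          · -- new instance on K : chords {0,y} and {r,s'}
            exact ih r (by omega) K P hP2 hPa hPc r y s'
              (le_refl _) (by omega) (by omega) (by omega) hsL
              hre hye (by omega) hch1 (by rw [hgs])
        · -- both odd
          have hso : s' % 2 = 1 := by omega
          have heo1 : s(K.g r, K.g s') ∈ G.edgeSet := hedge
          have hco1 : c s(K.g r, K.g s') = i := hcol
          have heo2 : s(K.g s', K.g r) ∈ G.edgeSet := by rwa [Sym2.eq_swap] at hedge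
          have hco2 : c s(K.g s', K.g r) = i := by rwa [Sym2.eq_swap] at hcol
          rcases Nat.lt_or_ge s' x' with hlt | hge
          · exact ⟨by omega, hlt⟩
          have hgx : x' < s' := by omega
          exfalso
          rcases Nat.lt_or_ge s' y with hsly | hsgy
          · -- odd chord {s', r} crossing {x',y'} : s' inside, r outside
            have := K.cross_eo hx'e hy'e (by omega) hy'L hgx (by omega)
              (Or.inl hrx) hso hro hee2 hce2 heo2 hco2
            omega
          · rcases Nat.lt_or_ge s' y' with hsly' | hsgy'
            · -- {r,s'} crosses {0,y} : r = 1, s' = y+1; then crosses {x',y'} : contra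
              have hc1 := K.cross_eo (x' := 0) (y' := y) (by omega) hye (by omega) hyL
                (by omega) (by omega) (Or.inr ⟨by omega, hsL⟩) hro hso hee hce heo1 hco1
              obtain ⟨hr1, hsy1⟩ := hc1
              have := K.cross_eo hx'e hy'e (by omega) hy'L (by omega : x' < s') (by omega)
                (Or.inl (by omega : r < x')) hso hro hee2 hce2 heo2 hco2
              omega
            · -- s' > y' : {r,s'} crosses {0,y} forces s' = y+1 < y' : contra
              have hc1 := K.cross_eo (x' := 0) (y' := y) (by omega) hye (by omega) hyL
                (by omega) (by omega) (Or.inr ⟨by omega, hsL⟩) hro hso hee hce heo1 hco1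
              omega
      · -- s' = r + 1, r even
        have : s' ≠ x' := hsx'
        exact ⟨by omega, by omega⟩
      · -- r = s' + 1, s' even
        exact ⟨by omega, by omega⟩
    have hσ2 : ∀ r ∈ A, σ (σ r) = r := by
      intro r hr
      rw [hAdef, Finset.mem_Ioo] at hr
      have hrL : r < K.L := by omega
      simp only [hσdef]
      rw [K.g_pos, hP2, K.pos_g hrL]
    have hσne : ∀ r ∈ A, σ r ≠ r := by
      intro r hr h
      rw [hAdef, Finset.mem_Ioo] at hr
      have hrL : r < K.L := by omega
      have : K.g (σ r) = P (K.g r) := K.g_pos _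
      rw [h] at this
      exact (hPa (K.g r)).ne (by rw [← this])
    have heven := PMAux.even_card_invol A σ hclos hσ2 hσne
    rw [hAdef, Nat.card_Ioo] at heven
    obtain ⟨k, hk⟩ := heven
    omega

end PMAux.Cyc

namespace PMAux.Cyc

variable {V : Type*} {G : SimpleGraph V} {c : Sym2 V → ℕ} {i j : ℕ}

/-- Two even-position colour-`i` chords at position 0 are impossible. -/
lemma three_edges (K : Cyc V G c i j) {β γ : ℕ} (hβ0 : 0 < β) (hβγ : β < γ) (hγL : γ < K.L)
    (hβe : β % 2 = 0) (hγe : γ % 2 = 0)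
    (heb : s(K.g 0, K.g β) ∈ G.edgeSet) (hcb : c s(K.g 0, K.g β) = i)
    (P : V → V) (hP2 : ∀ x, P (P x) = x) (hPa : ∀ x, G.Adj x (P x))
    (hPc : ∀ x, c s(x, P x) = i) (hPγ : P (K.g 0) = K.g γ) : False := by
  have h0L : (0:ℕ) < K.L := K.hL
  have hγ1L : γ + 1 < K.L := by have := K.hLe; omega
  have hee : s(K.g 0, K.g γ) ∈ G.edgeSet := by
    rw [← hPγ]; exact G.mem_edgeSet.2 (hPa _)
  have hce : c s(K.g 0, K.g γ) = i := by rw [← hPγ]; exact hPc _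
  set I : Finset ℕ := Finset.Ioo 0 γ with hIdef
  set σ : ℕ → ℕ := fun r => K.pos (P (K.g r)) with hσdef
  have hclos : ∀ r ∈ I, σ r ∈ I := by
    intro r hr
    rw [hIdef, Finset.mem_Ioo] at hr
    obtain ⟨hr0, hrγ⟩ := hr
    have hrL : r < K.L := by omega
    set s' := σ r with hs'def
    have hsL : s' < K.L := K.pos_lt _
    have hgs : K.g s' = P (K.g r) := K.g_pos _
    have hsr : s' ≠ r := by
      intro h
      rw [h] at hgs
      exact (hPa (K.g r)).ne (by rw [← hgs])
    have hs0 : s' ≠ 0 := by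
      intro h
      rw [h] at hgs
      have h7 := congrArg P hgs
      rw [hP2, hPγ] at h7
      have := K.hinj hγL hrL h7
      omega
    have hsγ : s' ≠ γ := by
      intro h
      rw [h, ← hPγ] at hgs
      have h7 := congrArg P hgs
      rw [hP2, hP2] at h7
      have := K.hinj h0L hrL h7
      omega
    have hedge : s(K.g r, K.g s') ∈ G.edgeSet := by
      rw [hgs]; exact G.mem_edgeSet.2 (hPa _)
    have hcol : c s(K.g r, K.g s') = i := by rw [hgs]; exact hPc _
    rw [hIdef, Finset.mem_Ioo]
    rcases K.chord_parity hrL hsL (fun h => hsr h.symm) hedge hcol with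
      hpar | ⟨hadj, hre⟩ | ⟨hadj, hse⟩
    · rcases Nat.lt_or_ge s' γ with hlt | hge
      · exact ⟨by omega, hlt⟩
      have hgγ : γ < s' := by omega
      exfalso
      rcases Nat.mod_two_eq_zero_or_one r with hre | hro
      · -- even-even crossing with {0,γ} : EE
        exact EE r K P hP2 hPa hPc r γ s' (le_refl _) (by omega) (by omega) hgγ hsL
          hre hγe (by omega) hPγ (by rw [hgs])
      · -- odd-odd chord crossing {0,γ}
        have hso : s' % 2 = 1 := by omega
        have hc1 := K.cross_eo (x' := 0) (y' := γ) (by omega) hγe (by omega) hγL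
          (by omega) (by omega) (Or.inr ⟨by omega, hsL⟩) hro hso hee hce hedge hcol
        -- r = 1, s' = γ + 1 ; now cross with {0, β}
        have hc2 := K.cross_eo (x' := 0) (y' := β) (by omega) hβe (by omega) (by omega)
          (by omega : 0 < r) (by omega : r < β) (Or.inr ⟨by omega, hsL⟩) hro hso heb hcb
          hedge hcol
        omega
    · -- s' = r + 1, r even
      refine ⟨by omega, by omega⟩
    · refine ⟨by omega, by omega⟩
  have hσ2 : ∀ r ∈ I, σ (σ r) = r := by
    intro r hr
    rw [hIdef, Finset.mem_Ioo] at hr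
    have hrL : r < K.L := by omega
    simp only [hσdef]
    rw [K.g_pos, hP2, K.pos_g hrL]
  have hσne : ∀ r ∈ I, σ r ≠ r := by
    intro r hr h
    rw [hIdef, Finset.mem_Ioo] at hr
    have hrL : r < K.L := by omega
    have hgs : K.g (σ r) = P (K.g r) := K.g_pos _
    rw [h] at hgs
    exact (hPa (K.g r)).ne (by rw [← hgs])
  have heven := PMAux.even_card_invol I σ hclos hσ2 hσne
  rw [hIdef, Nat.card_Ioo] at heven
  obtain ⟨k, hk⟩ := heven
  omega

end PMAux.Cyc

namespace PMAux

variable {V : Type*} [Fintype V] {G : SimpleGraph V}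

/-- Main auxiliary result: no vertex has three distinct neighbours whose connecting
edges all receive the same colour `i`, given a perfect matching of another colour `j`. -/
lemma no_three (hmc : ∀ e ∈ G.edgeSet, ∃ M : Set (Sym2 V), IsPerfectMatching G M ∧ e ∈ M)
    {c : Sym2 V → ℕ} (hmono : Mono G c) {i j : ℕ} (hij : i ≠ j)
    {N : Set (Sym2 V)} (hN : IsPerfectMatching G N) (hNc : ∀ e ∈ N, c e = j)
    {v u1 u2 u3 : V} (h12 : u1 ≠ u2) (h13 : u1 ≠ u3) (h23 : u2 ≠ u3)
    (ha1 : G.Adj v u1) (ha2 : G.Adj v u2) (ha3 : G.Adj v u3)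
    (hc1 : c s(v, u1) = i) (hc2 : c s(v, u2) = i) (hc3 : c s(v, u3) = i) : False := by
  classical
  -- partner function for N
  obtain ⟨q, hq2, hqa, hqN, _⟩ := exists_pfun hN
  have hqc : ∀ x, c s(x, q x) = j := fun x => hNc _ (hqN x)
  -- partner functions for the three covering matchings
  have getP : ∀ u : V, G.Adj v u → c s(v, u) = i →
      ∃ p : V → V, (∀ x, p (p x) = x) ∧ (∀ x, G.Adj x (p x)) ∧
        (∀ x, c s(x, p x) = i) ∧ p v = u := by
    intro u hadj hcu
    obtain ⟨M, hM, heM⟩ := hmc s(v, u) (G.mem_edgeSet.2 hadj)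
    obtain ⟨p, hp2, hpa, hpM, hpuniq⟩ := exists_pfun hM
    have hpv : p v = u := by
      have := hpuniq _ heM v (by simp)
      exact (Sym2.congr_right.1 this).symm
    refine ⟨p, hp2, hpa, ?_, hpv⟩
    intro x
    rw [hmono M hM _ (hpM x) _ heM]
    exact hcu
  obtain ⟨p1, hp12, hp1a, hp1c, hp1v⟩ := getP u1 ha1 hc1
  obtain ⟨p2, hp22, hp2a, hp2c, hp2v⟩ := getP u2 ha2 hc2
  obtain ⟨p3, hp32, hp3a, hp3c, hp3v⟩ := getP u3 ha3 hc3
  -- build the cycle from p1 and q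
  obtain ⟨K, hK0, hK1⟩ := cyc_exists hmono hij hp12 hp1a hq2 hqa hp1c hqc v
  rw [hp1v] at hK1
  -- positions of u2 and u3
  have hposgen : ∀ u : V, G.Adj v u → u ≠ u1 → c s(v, u) = i →
      0 < K.pos u ∧ K.pos u ≠ 1 ∧ K.pos u < K.L ∧ (K.pos u) % 2 = 0 := by
    intro u hadj hneu1 hcu
    have htL : K.pos u < K.L := K.pos_lt u
    have hgt : K.g (K.pos u) = u := K.g_pos u
    have ht0 : K.pos u ≠ 0 := by
      intro h
      rw [h, hK0] at hgt
      exact hadj.ne hgt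
    have ht1 : K.pos u ≠ 1 := by
      intro h
      rw [h, hK1] at hgt
      exact hneu1 hgt.symm
    have hedge : s(K.g 0, K.g (K.pos u)) ∈ G.edgeSet := by
      rw [hK0, hgt]; exact G.mem_edgeSet.2 hadj
    have hcol : c s(K.g 0, K.g (K.pos u)) = i := by rw [hK0, hgt]; exact hcu
    rcases K.chord_parity (a := 0) (b := K.pos u) K.hL htL (fun h => ht0 h.symm) hedge hcol
      with hpar | ⟨hadj', _⟩ | ⟨hadj', _⟩
    · exact ⟨by omega, ht1, htL, by omega⟩
    · omega
    · omega
  obtain ⟨h20, h21, h2L, h2e⟩ := hposgen u2 ha2 h12.symm hc2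
  obtain ⟨h30, h31, h3L, h3e⟩ := hposgen u3 ha3 h13.symm hc3
  have hne23 : K.pos u2 ≠ K.pos u3 := by
    intro h
    apply h23
    rw [← K.g_pos u2, ← K.g_pos u3, h]
  -- the chord edges at positions pos u2, pos u3
  have hedge2 : s(K.g 0, K.g (K.pos u2)) ∈ G.edgeSet := by
    rw [hK0, K.g_pos]; exact G.mem_edgeSet.2 ha2
  have hcol2 : c s(K.g 0, K.g (K.pos u2)) = i := by rw [hK0, K.g_pos]; exact hc2
  have hedge3 : s(K.g 0, K.g (K.pos u3)) ∈ G.edgeSet := by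
    rw [hK0, K.g_pos]; exact G.mem_edgeSet.2 ha3
  have hcol3 : c s(K.g 0, K.g (K.pos u3)) = i := by rw [hK0, K.g_pos]; exact hc3
  rcases Nat.lt_or_ge (K.pos u2) (K.pos u3) with hlt | hge
  · exact K.three_edges h20 hlt h3L h2e h3e hedge2 hcol2 p3 hp32 hp3a hp3c
      (by rw [hK0, hp3v]; exact (K.g_pos u3).symm)
  · exact K.three_edges h30 (by omega) h2L h3e h2e hedge3 hcol3 p2 hp22 hp2a hp2c
      (by rw [hK0, hp2v]; exact (K.g_pos u2).symm)

end PMAux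

theorem statement_8 {V : Type*} [Fintype V] (G : SimpleGraph V) [DecidableRel G.Adj]
    (hmc : MatchingCovered G) (hmu : matchingIndex G = 2) :
    ∀ v : V, G.degree v ≤ 4 := by
  classical
  intro v
  by_contra hdeg
  push_neg at hdeg
  have h2 : ∃ c : Sym2 V → ℕ, PMValid G c 2 := by
    unfold matchingIndex at hmu
    have hne : {k | ∃ c : Sym2 V → ℕ, PMValid G c k}.Nonempty := by
      by_contra h
      rw [Set.not_nonempty_iff_eq_empty] at h
      rw [h] at hmu
      simp at hmu
    have hbdd : BddAbove {k | ∃ c : Sym2 V → ℕ, PMValid G c k} := by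
      by_contra h
      rw [csSup_of_not_bddAbove h, csSup_empty] at hmu
      simp at hmu
    have := Nat.sSup_mem hne hbdd
    rwa [hmu] at this
  obtain ⟨c, hcr, hmono, hcpm⟩ := h2
  obtain ⟨N1, hN1, hN1c⟩ := hcpm 1 (by decide)
  obtain ⟨N2, hN2, hN2c⟩ := hcpm 2 (by decide)
  have hdeg5 : 5 ≤ (G.neighborFinset v).card := by
    rw [SimpleGraph.card_neighborFinset_eq_degree]
    omega
  set T1 := (G.neighborFinset v).filter (fun u => c s(v, u) = 1) with hT1
  set T2 := (G.neighborFinset v).filter (fun u => c s(v, u) = 2) with hT2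
  have hsub : G.neighborFinset v ⊆ T1 ∪ T2 := by
    intro u hu
    have hadj : G.Adj v u := by rwa [SimpleGraph.mem_neighborFinset] at hu
    have hic := hcr s(v,u) (G.mem_edgeSet.2 hadj)
    rw [Finset.mem_Icc] at hic
    rw [Finset.mem_union, hT1, hT2, Finset.mem_filter, Finset.mem_filter]
    rcases (by omega : c s(v,u) = 1 ∨ c s(v,u) = 2) with h | h
    · left; exact ⟨hu, h⟩
    · right; exact ⟨hu, h⟩
  have hcards : 3 ≤ T1.card ∨ 3 ≤ T2.card := by
    have h1 := Finset.card_le_card hsub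
    have h2 := Finset.card_union_le T1 T2
    omega
  have hmono' : PMAux.Mono G c := hmono
  rcases hcards with h3 | h3
  · obtain ⟨a, b, d, ha, hb, hd, hab, had, hbd⟩ :=
      Finset.two_lt_card_iff.1 (show 2 < T1.card by omega)
    simp only [hT1, Finset.mem_filter, SimpleGraph.mem_neighborFinset] at ha hb hd
    exact PMAux.no_three hmc hmono' (by omega : (1:ℕ) ≠ 2) hN2 hN2c hab had hbd
      ha.1 hb.1 hd.1 ha.2 hb.2 hd.2
  · obtain ⟨a, b, d, ha, hb, hd, hab, had, hbd⟩ :=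
      Finset.two_lt_card_iff.1 (show 2 < T2.card by omega)
    simp only [hT2, Finset.mem_filter, SimpleGraph.mem_neighborFinset] at ha hb hd
    exact PMAux.no_three hmc hmono' (by omega : (2:ℕ) ≠ 1) hN1 hN1c hab had hbd
      ha.1 hb.1 hd.1 ha.2 hb.2 hd.2
end

section
/- Assume Condition (*), and suppose G is not a cycle (G has at least one edge that is not a C-edge). Then there exists a drum {{u, v}, {u+1, v+1}} of G such that all vertices of one of the two arcs of C strictly between its C-edges have degree 2 in G: either every vertex in {u+2, u+3, …, v−1} has degree 2 in G, or every vertex in {v+2, v+3, …, u−1} has degree 2 in G. -/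
/-- `e` is a C-edge: an edge of the distinguished Hamiltonian cycle `0, 1, …, 2n-1`
on `ZMod (2n)`, i.e. `e = {i, i+1}` for some `i`. -/
def IsCEdge (n : ℕ) (e : Sym2 (ZMod (2 * n))) : Prop :=
  ∃ i : ZMod (2 * n), e = s(i, i + 1)

/-- `e` is a legal edge: it joins two vertices of the same parity
(the parity of the residue is well defined since the modulus `2n` is even). -/
def IsLegal (n : ℕ) (e : Sym2 (ZMod (2 * n))) : Prop :=
  ∃ a b : ZMod (2 * n), e = s(a, b) ∧ a.val % 2 = b.val % 2

/-- `k` lies on the arc strictly between `i` and `j` in clockwise (increasing) order,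
i.e. `k ∈ {i+1, i+2, …, j-1}`. -/
def InArc (n : ℕ) (i j k : ZMod (2 * n)) : Prop :=
  0 < (k - i).val ∧ (k - i).val < (j - i).val

/-- Edges `e = {a, b}` and `e'` cross: `e'` has one endpoint in `P(e)` (the arc strictly
between `a` and `b`) and its other endpoint in `P'(e)` (the arc strictly between `b` and `a`). -/
def Crosses (n : ℕ) (e e' : Sym2 (ZMod (2 * n))) : Prop :=
  ∃ a b x y : ZMod (2 * n), e = s(a, b) ∧ e' = s(x, y) ∧ InArc n a b x ∧ InArc n b a y

/-- `{e, e'}` is a drum: an unordered pair of crossing legal edges of the form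
`{u, v}` and `{u+1, v+1}`. -/
def IsDrum (n : ℕ) (e e' : Sym2 (ZMod (2 * n))) : Prop :=
  IsLegal n e ∧ IsLegal n e' ∧ Crosses n e e' ∧
  ∃ u v : ZMod (2 * n),
    (e = s(u, v) ∧ e' = s(u + 1, v + 1)) ∨ (e' = s(u, v) ∧ e = s(u + 1, v + 1))

/-- Condition (*): `n ≥ 3`, `G` (on vertex set `ZMod (2n)`) contains every C-edge,
`G` is matching covered, `c` is a PMValid 2-edge-colouring of `G` with colours
red (= 1) and blue (= 2), and the C-edges are coloured alternately:
the edge `{i, i+1}` is red when `i` is odd and blue when `i` is even. -/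
def CondStar (n : ℕ) (G : SimpleGraph (ZMod (2 * n))) (c : Sym2 (ZMod (2 * n)) → ℕ) : Prop :=
  3 ≤ n ∧ (∀ i : ZMod (2 * n), G.Adj i (i + 1)) ∧ MatchingCovered G ∧ PMValid G c 2 ∧
  ∀ i : ZMod (2 * n), c (s(i, i + 1)) = if i.val % 2 = 1 then 1 else 2

/-!
Let `{u, u+m}` be a shortest chord (an edge off the cycle `C`). Cycle edges alternate in colour,
so any perfect matching made of a few chords and of cycle edges filling the arcs between their
endpoints shows which cycle colour the chords must have. A single chord of odd length forces
both cycle colours into one matching, so every chord has even length. Two crossing chords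
`{β, β+a}`, `{β+p, β+q}` with `0 < p < a < q`, `p` odd and `a` even force the colour of
`{β+1, β+2}` when `p > 1` or `q > a + 1`, and the colour of `{β, β+1}` when `p + 1 < a`.

After the reflection `x ↦ -1 - x` if necessary, the shortest chord has the colour of
`{u, u+1}`. In a perfect matching through `{u, u+m}` the partner of `u+1` is not `u+2` (wrong
colour), so `u+1` lies on a chord; it is at least as long as `m`, and a crossing argument
leaves only `{u+1, u+m+1}`: this is the drum. A chord at an inner vertex `u+t`, `2 ≤ t < m`,
would have length at least `m`, so it would cross `{u, u+m}` (`t` odd) or `{u+1, u+m+1}`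
(`t` even) in a way that forces the wrong colour. Hence the inner vertices have degree 2.
-/

namespace IsPerfectMatching

variable {V W : Type*} {G : SimpleGraph V} {M : Set (Sym2 V)}

theorem exists_mem (hM : IsPerfectMatching G M) (v : V) : ∃ w, s(v, w) ∈ M := by
  obtain ⟨e, ⟨he, hv⟩, -⟩ := hM.2 v
  induction e using Sym2.ind with
  | _ x y =>
    rcases Sym2.mem_iff.mp hv with rfl | rfl
    · exact ⟨y, he⟩
    · exact ⟨x, Sym2.eq_swap ▸ he⟩

theorem eq_of_mem (hM : IsPerfectMatching G M) {v w w' : V} (h : s(v, w) ∈ M)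
    (h' : s(v, w') ∈ M) : w = w' := by
  obtain ⟨e, -, huniq⟩ := hM.2 v
  exact Sym2.congr_right.mp
    ((huniq _ ⟨h, Sym2.mem_mk_left _ _⟩).trans (huniq _ ⟨h', Sym2.mem_mk_left _ _⟩).symm)

theorem of_involutive (π : V → V) (hπ : Function.Involutive π) (hadj : ∀ v, G.Adj v (π v)) :
    IsPerfectMatching G (Set.range fun v => s(v, π v)) := by
  refine ⟨Set.range_subset_iff.mpr hadj,
    fun v => ⟨s(v, π v), ⟨⟨v, rfl⟩, Sym2.mem_mk_left _ _⟩, ?_⟩⟩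
  rintro _ ⟨⟨w, rfl⟩, hv⟩
  rcases Sym2.mem_iff.mp hv with rfl | rfl
  · rfl
  · rw [hπ, Sym2.eq_swap]

theorem comap {G : SimpleGraph W} {M : Set (Sym2 W)} (hM : IsPerfectMatching G M) (φ : V ≃ W) :
    IsPerfectMatching (G.comap φ) (Sym2.map φ ⁻¹' M) := by
  refine ⟨fun e he => ?_, fun v => ?_⟩
  · induction e using Sym2.ind with
    | _ x y => exact hM.1 he
  · obtain ⟨w, hw⟩ := hM.exists_mem (φ v)
    refine ⟨s(v, φ.symm w), ⟨by simpa using hw, Sym2.mem_mk_left _ _⟩,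
      fun e ⟨he, hv⟩ => ?_⟩
    induction e using Sym2.ind with
    | _ x y =>
      rcases Sym2.mem_iff.mp hv with rfl | rfl
      · rw [← hM.eq_of_mem he hw, Equiv.symm_apply_apply]
      · rw [Sym2.eq_swap, ← hM.eq_of_mem (Sym2.eq_swap ▸ he) hw, Equiv.symm_apply_apply]

end IsPerfectMatching

section Relabel

variable {V W : Type*} {G : SimpleGraph W} (φ : V ≃ W)

theorem MatchingCovered.comap (hG : MatchingCovered G) : MatchingCovered (G.comap φ) := by
  intro e he
  induction e using Sym2.ind with
  | _ x y =>
    obtain ⟨M, hM, hxy⟩ := hG s(φ x, φ y) he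
    exact ⟨_, hM.comap φ, hxy⟩

theorem PMValid.comap {c : Sym2 W → ℕ} {k : ℕ} (hc : PMValid G c k) :
    PMValid (G.comap φ) (c ∘ Sym2.map φ) k := by
  obtain ⟨hrange, hmono, hclass⟩ := hc
  refine ⟨fun e he => ?_, fun M hM e he e' he' => ?_, fun i hi => ?_⟩
  · induction e using Sym2.ind with
    | _ x y => exact hrange s(φ x, φ y) he
  · have hM' : IsPerfectMatching G (Sym2.map φ.symm ⁻¹' M) := by
      simpa [SimpleGraph.comap_comap] using hM.comap φ.symm
    exact hmono _ hM' _ (by simpa [Sym2.map_map] using he) _ (by simpa [Sym2.map_map] using he')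
  · obtain ⟨M, hM, hMi⟩ := hclass i hi
    exact ⟨_, hM.comap φ, fun e he => hMi _ he⟩

theorem SimpleGraph.ncard_neighborSet_comap (v : V) :
    ((G.comap φ).neighborSet v).ncard = (G.neighborSet (φ v)).ncard := by
  rw [SimpleGraph.neighborSet_comap,
    Set.ncard_preimage_of_injective_subset_range φ.injective (by simp)]

end Relabel

namespace ZMod

theorem val_add_natCast_sub_add_natCast {N : ℕ} (β : ZMod N) {s t : ℕ} (hts : t ≤ s)
    (hs : s < N) : ((β + s) - (β + t)).val = s - t := by
  rw [add_sub_add_left_eq_sub, ← Nat.cast_sub hts, ZMod.val_cast_of_lt (by omega)]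

variable {n : ℕ} [NeZero n]

theorem val_add_mod_two (x y : ZMod (2 * n)) : (x + y).val % 2 = (x.val + y.val) % 2 := by
  rw [ZMod.val_add, Nat.mod_mod_of_dvd _ (dvd_mul_right 2 n)]

theorem val_add_natCast_mod_two (β : ZMod (2 * n)) (t : ℕ) :
    (β + t).val % 2 = (β.val + t) % 2 := by
  rw [val_add_mod_two, ZMod.val_natCast, Nat.add_mod, Nat.mod_mod_of_dvd _ (dvd_mul_right 2 n),
    ← Nat.add_mod]

end ZMod

/-! Offsets `t < N` from a base vertex `β` stand for the vertices `β + t` of the cycle.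
`arcPartner e` pairs `e+1` with `e+2`, `e+3` with `e+4`, and so on: the cycle edges
covering an arc of even length that starts after the chord endpoint `e`. -/

def arcPartner (e t : ℕ) : ℕ := if (t - e) % 2 = 1 then t + 1 else t - 1

theorem arcPartner_succ (e : ℕ) : arcPartner e (e + 1) = e + 1 + 1 := by
  simp [arcPartner]

theorem arcPartner_mem {e e' t : ℕ} (he : (e' - e) % 2 = 1) (h : e < t) (h' : t < e') :
    e < arcPartner e t ∧ arcPartner e t < e' ∧ arcPartner e (arcPartner e t) = t := by
  generalize hs : arcPartner e t = s
  unfold arcPartner at hs ⊢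
  split_ifs at hs ⊢ <;> omega

theorem arcPartner_mem_of_eqOn {f : ℕ → ℕ} {e e' t : ℕ} (he : (e' - e) % 2 = 1) (h : e < t)
    (h' : t < e') (hf : ∀ s, e < s → s < e' → f s = arcPartner e s) :
    e < f t ∧ f t < e' ∧ f (f t) = t := by
  obtain ⟨h₁, h₂, h₃⟩ := arcPartner_mem he h h'
  rw [hf t h h', hf _ h₁ h₂]
  exact ⟨h₁, h₂, h₃⟩

def chordPartner (a t : ℕ) : ℕ :=
  if t = 0 then a else if t < a then arcPartner 0 t else if t = a then 0 else arcPartner a t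

section chordPartner

variable {a t : ℕ}

theorem chordPartner_zero : chordPartner a 0 = a := if_pos rfl

theorem chordPartner_self (ha : 0 < a) : chordPartner a a = 0 := by
  simp [chordPartner, ha.ne']

theorem chordPartner_of_lt (h : 0 < t) (h' : t < a) : chordPartner a t = arcPartner 0 t := by
  rw [chordPartner, if_neg h.ne', if_pos h']

theorem chordPartner_of_gt (h : a < t) : chordPartner a t = arcPartner a t := by
  rw [chordPartner, if_neg (by omega), if_neg (by omega), if_neg (by omega)]

theorem chordPartner_involutive {N : ℕ} (hN : N % 2 = 0) (ha : 0 < a) (haN : a < N)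
    (ha2 : a % 2 = 1) (ht : t < N) :
    chordPartner a t < N ∧ chordPartner a (chordPartner a t) = t := by
  rcases Nat.eq_zero_or_pos t with rfl | ht0
  · rw [chordPartner_zero, chordPartner_self ha]; exact ⟨haN, rfl⟩
  rcases lt_trichotomy t a with hta | rfl | hat
  · obtain ⟨-, h₂, h₃⟩ := arcPartner_mem_of_eqOn (f := chordPartner a) (by omega) ht0 hta
      fun s h h' => chordPartner_of_lt h h'
    exact ⟨by omega, h₃⟩
  · rw [chordPartner_self ht0, chordPartner_zero]; exact ⟨by omega, rfl⟩
  · obtain ⟨-, h₂, h₃⟩ := arcPartner_mem_of_eqOn (f := chordPartner a) (by omega) hat ht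
      fun s h _ => chordPartner_of_gt h
    exact ⟨h₂, h₃⟩

end chordPartner

def crossingPartner (a p q t : ℕ) : ℕ :=
  if t = 0 then a else if t < p then arcPartner 0 t else if t = p then q
  else if t < a then arcPartner p t else if t = a then 0 else if t < q then arcPartner a t
  else if t = q then p else arcPartner q t

section crossingPartner

variable {a p q t : ℕ}

theorem crossingPartner_zero : crossingPartner a p q 0 = a := if_pos rfl

theorem crossingPartner_first_arc (h : 0 < t) (h' : t < p) :
    crossingPartner a p q t = arcPartner 0 t := by
  unfold crossingPartner; rw [if_neg (by omega), if_pos h']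

theorem crossingPartner_second_arc (h : p < t) (h' : t < a) :
    crossingPartner a p q t = arcPartner p t := by
  unfold crossingPartner; rw [if_neg (by omega), if_neg (by omega), if_neg (by omega), if_pos h']

theorem crossingPartner_third_arc (hpa : p < a) (h : a < t) (h' : t < q) :
    crossingPartner a p q t = arcPartner a t := by
  unfold crossingPartner
  rw [if_neg (by omega), if_neg (by omega), if_neg (by omega), if_neg (by omega),
    if_neg (by omega), if_pos h']

theorem crossingPartner_fourth_arc (hpa : p < a) (haq : a < q) (h : q < t) :
    crossingPartner a p q t = arcPartner q t := by
  unfold crossingPartner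
  rw [if_neg (by omega), if_neg (by omega), if_neg (by omega), if_neg (by omega),
    if_neg (by omega), if_neg (by omega), if_neg (by omega)]

theorem crossingPartner_involutive {N : ℕ} (hN : N % 2 = 0) (hp : 0 < p) (hpa : p < a)
    (haq : a < q) (hqN : q < N) (hp2 : p % 2 = 1) (ha2 : a % 2 = 0) (hq2 : q % 2 = 1)
    (ht : t < N) :
    crossingPartner a p q t < N ∧ crossingPartner a p q (crossingPartner a p q t) = t := by
  have hend : crossingPartner a p q a = 0 ∧ crossingPartner a p q p = q ∧
      crossingPartner a p q q = p := by
    refine ⟨?_, ?_, ?_⟩ <;> unfold crossingPartner <;> split_ifs <;> omega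
  have arc : ∀ e e', (e' - e) % 2 = 1 → e < t → t < e' → e' ≤ N →
      (∀ s, e < s → s < e' → crossingPartner a p q s = arcPartner e s) →
      crossingPartner a p q t < N ∧ crossingPartner a p q (crossingPartner a p q t) = t :=
    fun e e' he h h' he' hf => by
      obtain ⟨-, h₂, h₃⟩ := arcPartner_mem_of_eqOn he h h' hf
      exact ⟨by omega, h₃⟩
  rcases Nat.eq_zero_or_pos t with rfl | h0
  · rw [crossingPartner_zero, hend.1]; exact ⟨by omega, rfl⟩
  rcases lt_trichotomy t p with h1 | rfl | h1
  · exact arc 0 p (by omega) h0 h1 (by omega) fun s h h' => crossingPartner_first_arc h h'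
  · rw [hend.2.1, hend.2.2]; exact ⟨by omega, rfl⟩
  rcases lt_trichotomy t a with h2 | rfl | h2
  · exact arc p a (by omega) h1 h2 (by omega) fun s h h' => crossingPartner_second_arc h h'
  · rw [hend.1, crossingPartner_zero]; exact ⟨by omega, rfl⟩
  rcases lt_trichotomy t q with h3 | rfl | h3
  · exact arc a q (by omega) h2 h3 (by omega) fun s h h' => crossingPartner_third_arc hpa h h'
  · rw [hend.2.2, hend.2.1]; exact ⟨by omega, rfl⟩
  · exact arc q N (by omega) h3 ht le_rfl fun s h _ => crossingPartner_fourth_arc hpa haq h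

end crossingPartner

section CycleMatchings

variable {N : ℕ} {G : SimpleGraph (ZMod N)}

theorem exists_isPerfectMatching_of_offsets [NeZero N] (β : ZMod N) (f : ℕ → ℕ)
    (hf : ∀ t < N, f t < N ∧ f (f t) = t) (hadj : ∀ t < N, G.Adj (β + t) (β + f t)) :
    ∃ M, IsPerfectMatching G M ∧ ∀ t < N, s(β + t, β + f t) ∈ M := by
  have hval : ∀ t < N, (β + t - β).val = t := fun t ht => by
    rw [add_sub_cancel_left, ZMod.val_cast_of_lt ht]
  let π : ZMod N → ZMod N := fun w => β + f (w - β).val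
  have hπ : Function.Involutive π := fun w => by
    have hw := ZMod.val_lt (w - β)
    simp only [π, hval _ (hf _ hw).1, (hf _ hw).2, ZMod.natCast_zmod_val, add_sub_cancel]
  refine ⟨_, IsPerfectMatching.of_involutive π hπ fun w => ?_, fun t ht => ⟨β + t, ?_⟩⟩
  · simpa [π] using hadj _ (ZMod.val_lt (w - β))
  · simp only [π, hval t ht]

theorem adj_add_arcPartner (hC : ∀ i, G.Adj i (i + 1)) (β : ZMod N) {e t : ℕ} (h : e < t) :
    G.Adj (β + t) (β + arcPartner e t) := by
  unfold arcPartner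
  split_ifs
  · simpa [add_assoc] using hC (β + t)
  · obtain ⟨s, rfl⟩ : ∃ s, t = s + 1 := ⟨t - 1, by omega⟩
    simpa [add_assoc] using (hC (β + s)).symm

theorem exists_isPerfectMatching_chordPartner [NeZero N] (hN : N % 2 = 0)
    (hC : ∀ i, G.Adj i (i + 1)) (β : ZMod N) {a : ℕ} (ha : 0 < a) (haN : a < N)
    (ha2 : a % 2 = 1) (hX : G.Adj β (β + a)) :
    ∃ M, IsPerfectMatching G M ∧ ∀ t < N, s(β + t, β + chordPartner a t) ∈ M := by
  refine exists_isPerfectMatching_of_offsets β _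
    (fun t ht => chordPartner_involutive hN ha haN ha2 ht) fun t _ => ?_
  unfold chordPartner
  split_ifs with h0 _ ha'
  · simpa [h0] using hX
  · exact adj_add_arcPartner hC β (by omega)
  · simpa [ha'] using hX.symm
  · exact adj_add_arcPartner hC β (by omega)

theorem exists_isPerfectMatching_crossingPartner [NeZero N] (hN : N % 2 = 0)
    (hC : ∀ i, G.Adj i (i + 1)) (β : ZMod N) {a p q : ℕ} (hp : 0 < p) (hpa : p < a)
    (haq : a < q) (hqN : q < N) (hp2 : p % 2 = 1) (ha2 : a % 2 = 0) (hq2 : q % 2 = 1)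
    (hX : G.Adj β (β + a)) (hY : G.Adj (β + p) (β + q)) :
    ∃ M, IsPerfectMatching G M ∧ ∀ t < N, s(β + t, β + crossingPartner a p q t) ∈ M := by
  refine exists_isPerfectMatching_of_offsets β _
    (fun t ht => crossingPartner_involutive hN hp hpa haq hqN hp2 ha2 hq2 ht) fun t _ => ?_
  unfold crossingPartner
  split_ifs with h0 _ hp' _ ha' _ hq'
  · simpa [h0] using hX
  · exact adj_add_arcPartner hC β (by omega)
  · simpa [hp'] using hY
  · exact adj_add_arcPartner hC β (by omega)
  · simpa [ha'] using hX.symm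
  · exact adj_add_arcPartner hC β (by omega)
  · simpa [hq'] using hY.symm
  · exact adj_add_arcPartner hC β (by omega)

end CycleMatchings

section Chords

variable {N : ℕ} {G : SimpleGraph (ZMod N)}

def IsChord (G : SimpleGraph (ZMod N)) (x y : ZMod N) : Prop :=
  G.Adj x y ∧ y ≠ x + 1 ∧ x ≠ y + 1

def IsShortestChord (G : SimpleGraph (ZMod N)) (u : ZMod N) (m : ℕ) : Prop :=
  IsChord G u (u + m) ∧ ∀ x y, IsChord G x y → m ≤ (y - x).val

def IsDrumWithDegreeTwoArc (G : SimpleGraph (ZMod N)) (u : ZMod N) (m : ℕ) : Prop :=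
  IsChord G u (u + m) ∧ IsChord G (u + 1) (u + m + 1) ∧
    ∀ t : ℕ, 2 ≤ t → t < m → (G.neighborSet (u + t)).ncard = 2

theorem IsChord.symm {x y : ZMod N} (h : IsChord G x y) : IsChord G y x :=
  ⟨h.1.symm, h.2.2, h.2.1⟩

theorem IsChord.val_sub_bounds [NeZero N] {x y : ZMod N} (h : IsChord G x y) :
    2 ≤ (y - x).val ∧ (y - x).val + 2 ≤ N := by
  have hy : y = x + (y - x).val := by simp
  have hlt := ZMod.val_lt (y - x)
  refine ⟨?_, ?_⟩
  · by_contra! hsmall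
    interval_cases hval : (y - x).val
    · exact h.1.ne' (by simpa [hval] using hy)
    · exact h.2.1 (by simpa [hval] using hy)
  · by_contra! hbig
    have hval : (y - x).val + 1 = N := by omega
    refine h.2.2 ?_
    calc x = x + ((y - x).val + 1 : ℕ) := by rw [hval, ZMod.natCast_self, add_zero]
      _ = y + 1 := by rw [Nat.cast_succ, ← add_assoc, ← hy]

theorem exists_isChord_of_not_isCEdge {n : ℕ} {G : SimpleGraph (ZMod (2 * n))}
    {e : Sym2 (ZMod (2 * n))} (he : e ∈ G.edgeSet) (hC : ¬ IsCEdge n e) :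
    ∃ x y, IsChord G x y := by
  induction e using Sym2.ind with
  | _ x y =>
    exact ⟨x, y, he, fun h => hC ⟨x, by rw [h]⟩,
      fun h => hC ⟨y, by rw [h, Sym2.eq_swap]⟩⟩

theorem exists_isShortestChord [NeZero N] {x y : ZMod N} (hxy : IsChord G x y) :
    ∃ u m, IsShortestChord G u m := by
  classical
  have hP : ∃ d : ℕ, ∃ u, IsChord G u (u + d) := ⟨(y - x).val, x, by simpa using hxy⟩
  obtain ⟨u, hu⟩ := Nat.find_spec hP
  exact ⟨u, Nat.find hP, hu, fun x' y' h' => Nat.find_min' hP ⟨x', by simpa using h'⟩⟩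

theorem IsShortestChord.lt [NeZero N] {u : ZMod N} {m : ℕ} (hS : IsShortestChord G u m) :
    m < N :=
  (hS.2 _ _ hS.1).trans_lt (by rw [add_sub_cancel_left]; exact ZMod.val_lt _)

theorem IsShortestChord.bounds [NeZero N] {u : ZMod N} {m : ℕ} (hS : IsShortestChord G u m) :
    2 ≤ m ∧ m + 2 ≤ N := by
  have := hS.1.val_sub_bounds
  rwa [add_sub_cancel_left, ZMod.val_cast_of_lt hS.lt] at this

theorem ncard_neighborSet_eq_two (hN : 2 < N) (hC : ∀ i, G.Adj i (i + 1)) {k : ZMod N}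
    (hk : ∀ w, ¬ IsChord G k w) : (G.neighborSet k).ncard = 2 := by
  have hnbr : G.neighborSet k = {k - 1, k + 1} := by
    ext w
    simp only [SimpleGraph.mem_neighborSet, Set.mem_insert_iff, Set.mem_singleton_iff]
    refine ⟨fun hw => ?_, ?_⟩
    · by_contra! hne
      exact hk w ⟨hw, hne.2, fun h => hne.1 (eq_sub_of_add_eq h.symm)⟩
    · rintro (rfl | rfl)
      · simpa using (hC (k - 1)).symm
      · exact hC k
  rw [hnbr, Set.ncard_pair]
  intro h
  have : ((2 : ℕ) : ZMod N) = 0 := by push_cast; linear_combination -h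
  rw [ZMod.natCast_eq_zero_iff] at this
  exact absurd (Nat.le_of_dvd two_pos this) (by omega)

end Chords

def cycleColour (k : ℕ) : ℕ := if k % 2 = 1 then 1 else 2

theorem cycleColour_congr {k l : ℕ} (h : k % 2 = l % 2) : cycleColour k = cycleColour l := by
  simp only [cycleColour, h]

theorem cycleColour_succ_ne (k : ℕ) : cycleColour (k + 1) ≠ cycleColour k := by
  unfold cycleColour; split_ifs <;> omega

theorem cycleColour_eq_of_ne {k l x : ℕ} (hkl : k % 2 ≠ l % 2) (hx : x ∈ Finset.Icc 1 2)
    (hne : x ≠ cycleColour k) : x = cycleColour l := by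
  rw [Finset.mem_Icc] at hx
  unfold cycleColour at *
  split_ifs at * <;> omega

namespace CondStar

variable {n : ℕ} {G : SimpleGraph (ZMod (2 * n))} {c : Sym2 (ZMod (2 * n)) → ℕ}

theorem neZero (h : CondStar n G c) : NeZero n := ⟨by have := h.1; omega⟩

theorem adj_add_one (h : CondStar n G c) (i : ZMod (2 * n)) : G.Adj i (i + 1) := h.2.1 i

theorem matchingCovered (h : CondStar n G c) : MatchingCovered G := h.2.2.1

theorem pmValid (h : CondStar n G c) : PMValid G c 2 := h.2.2.2.1

theorem colour_add_one (h : CondStar n G c) (i : ZMod (2 * n)) :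
    c s(i, i + 1) = cycleColour i.val :=
  h.2.2.2.2 i

theorem colour_mem_Icc (h : CondStar n G c) {x y : ZMod (2 * n)} (hxy : G.Adj x y) :
    c s(x, y) ∈ Finset.Icc 1 2 :=
  h.pmValid.1 _ hxy

theorem colour_eq_of_isPerfectMatching (h : CondStar n G c) {M : Set (Sym2 (ZMod (2 * n)))}
    (hM : IsPerfectMatching G M) {e e' : Sym2 (ZMod (2 * n))} (he : e ∈ M) (he' : e' ∈ M) :
    c e = c e' :=
  h.pmValid.2.1 M hM e he e' he'

theorem colour_cycleEdge (h : CondStar n G c) (β : ZMod (2 * n)) (t : ℕ) :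
    c s(β + t, β + (t + 1 : ℕ)) = cycleColour (β.val + t) := by
  have := h.neZero
  rw [Nat.cast_succ, ← add_assoc, h.colour_add_one]
  exact cycleColour_congr (ZMod.val_add_natCast_mod_two β t)

theorem colour_succ_ne (h : CondStar n G c) (x : ZMod (2 * n)) :
    c s(x + 1, x + 1 + 1) ≠ c s(x, x + 1) := by
  have := h.neZero
  rw [h.colour_add_one, h.colour_add_one,
    cycleColour_congr (by simpa using ZMod.val_add_natCast_mod_two x 1)]
  exact cycleColour_succ_ne _

theorem val_sub_even (h : CondStar n G c) {x y : ZMod (2 * n)} (hxy : IsChord G x y) :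
    (y - x).val % 2 = 0 := by
  have := h.neZero
  by_contra hodd
  set a := (y - x).val with ha
  have hy : y = x + a := by simp [a]
  obtain ⟨ha2, haN⟩ := hxy.val_sub_bounds
  rw [← ha] at ha2 haN
  obtain ⟨M, hM, hmem⟩ := exists_isPerfectMatching_chordPartner (by omega) h.adj_add_one x
    (a := a) (by omega) (by omega) (by omega) (hy ▸ hxy.1)
  have hfirst : chordPartner a 1 = 1 + 1 := by
    rw [chordPartner_of_lt one_pos (by omega)]; exact arcPartner_succ 0
  have hlast : chordPartner a (a + 1) = a + 1 + 1 := by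
    rw [chordPartner_of_gt (by omega), arcPartner_succ]
  have hcol := h.colour_eq_of_isPerfectMatching hM (hmem 1 (by omega)) (hmem (a + 1) (by omega))
  rw [hfirst, hlast, h.colour_cycleEdge, h.colour_cycleEdge] at hcol
  unfold cycleColour at hcol
  split_ifs at hcol <;> omega

theorem colour_of_crossing (h : CondStar n G c) (β : ZMod (2 * n)) {a p q : ℕ} (hp : 0 < p)
    (hpa : p < a) (haq : a < q) (hqN : q < 2 * n) (hp2 : p % 2 = 1) (ha2 : a % 2 = 0)
    (hq2 : q % 2 = 1) (hX : G.Adj β (β + a)) (hY : G.Adj (β + p) (β + q)) :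
    (1 < p ∨ a + 1 < q → c s(β, β + a) = cycleColour (β.val + 1)) ∧
    (p + 1 < a → c s(β, β + a) = cycleColour β.val) := by
  have := h.neZero
  obtain ⟨M, hM, hmem⟩ := exists_isPerfectMatching_crossingPartner (by omega) h.adj_add_one β
    hp hpa haq hqN hp2 ha2 hq2 hX hY
  have hXM : s(β, β + a) ∈ M := by simpa [crossingPartner_zero] using hmem 0 (by omega)
  have cycle : ∀ t < 2 * n, crossingPartner a p q t = t + 1 →
      c s(β, β + a) = cycleColour (β.val + t) := fun t ht hpt => by
    rw [← h.colour_cycleEdge, ← hpt]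
    exact h.colour_eq_of_isPerfectMatching hM hXM (hmem t ht)
  refine ⟨fun hcase => ?_, fun hcase => ?_⟩
  · rcases hcase with h1 | h1
    · refine cycle 1 (by omega) ?_
      rw [crossingPartner_first_arc one_pos h1]
      exact arcPartner_succ 0
    · rw [cycle (a + 1) (by omega) (by rw [crossingPartner_third_arc hpa (by omega) h1,
        arcPartner_succ])]
      exact cycleColour_congr (by omega)
  · rw [cycle (p + 1) (by omega) (by rw [crossingPartner_second_arc (by omega) hcase,
      arcPartner_succ])]
    exact cycleColour_congr (by omega)

variable {u : ZMod (2 * n)} {m : ℕ}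

theorem even_of_isShortestChord (h : CondStar n G c) (hS : IsShortestChord G u m) :
    m % 2 = 0 := by
  have := h.neZero
  have := h.val_sub_even hS.1
  rwa [add_sub_cancel_left, ZMod.val_cast_of_lt hS.lt] at this

theorem adj_succ_of_isShortestChord (h : CondStar n G c) (hS : IsShortestChord G u m)
    (hcol : c s(u, u + m) = c s(u, u + 1)) :
    G.Adj (u + 1) (u + m + 1) ∧ c s(u + 1, u + m + 1) = c s(u, u + m) := by
  have := h.neZero
  obtain ⟨hm2, hmN⟩ := hS.bounds
  have hmeven := h.even_of_isShortestChord hS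
  obtain ⟨M, hM, hXM⟩ := h.matchingCovered s(u, u + m) hS.1.1
  obtain ⟨z, hzM⟩ := hM.exists_mem (u + 1)
  have hzcol : c s(u + 1, z) = c s(u, u + m) := h.colour_eq_of_isPerfectMatching hM hzM hXM
  have hchord : IsChord G (u + 1) z := by
    refine ⟨hM.1 hzM, fun hz => h.colour_succ_ne u (by rw [← hz, hzcol, hcol]), fun hz => ?_⟩
    obtain rfl : z = u := add_right_cancel hz.symm
    exact hS.1.2.1 (hM.eq_of_mem hXM (by rwa [Sym2.eq_swap] at hzM))
  set ζ := (z - u).val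
  have hz : z = u + ζ := by simp [ζ]
  have hζ : 1 ≤ ζ := Nat.one_le_iff_ne_zero.mpr fun h0 => hchord.2.2 (by simp [hz, h0])
  have hspan : (z - (u + 1)).val = ζ - 1 := by
    simpa [← hz] using ZMod.val_add_natCast_sub_add_natCast u hζ (ZMod.val_lt (z - u))
  have hge := hS.2 _ _ hchord
  have hpar := h.val_sub_even hchord
  rw [hspan] at hge hpar
  have hζeq : ζ = m + 1 := by
    by_contra hne
    have hY : G.Adj (u + (1 : ℕ)) (u + ζ) := by simpa [← hz] using hchord.1
    have := (h.colour_of_crossing u one_pos (by omega) (by omega) (ZMod.val_lt (z - u)) rfl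
      hmeven (by omega) hS.1.1 hY).1 (Or.inr (by omega))
    exact cycleColour_succ_ne _ (this.symm.trans (hcol.trans (h.colour_add_one u)))
  obtain rfl : z = u + m + 1 := by rw [hz, hζeq]; push_cast; ring
  exact ⟨hchord.1, hzcol⟩

theorem not_isChord_of_isShortestChord (h : CondStar n G c) (hS : IsShortestChord G u m)
    (hcol : c s(u, u + m) = c s(u, u + 1)) (hY : G.Adj (u + 1) (u + m + 1))
    (hYcol : c s(u + 1, u + m + 1) = c s(u, u + m)) {t : ℕ} (ht : 2 ≤ t) (htm : t < m)
    (w : ZMod (2 * n)) : ¬ IsChord G (u + t) w := by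
  intro hkw
  have := h.neZero
  obtain ⟨hm2, hmN⟩ := hS.bounds
  have hmeven := h.even_of_isShortestChord hS
  set η := (w - u).val
  have hη : η < 2 * n := ZMod.val_lt _
  rw [show w = u + η by simp [η]] at hkw
  have htη : t < η := by
    by_contra! hle
    rcases hle.lt_or_eq with hlt | rfl
    · have := hS.2 _ _ hkw.symm
      rw [ZMod.val_add_natCast_sub_add_natCast u hlt.le (by omega)] at this
      omega
    · exact hkw.1.ne rfl
  have hge := hS.2 _ _ hkw
  have hpar := h.val_sub_even hkw
  rw [ZMod.val_add_natCast_sub_add_natCast u htη.le hη] at hge hpar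
  by_cases ht2 : t % 2 = 1
  · have := (h.colour_of_crossing u (by omega) htm (by omega) hη ht2 hmeven (by omega) hS.1.1
      hkw.1).1 (Or.inl (by omega))
    exact cycleColour_succ_ne _ (this.symm.trans (hcol.trans (h.colour_add_one u)))
  · have hY' : G.Adj (u + 1) (u + 1 + m) := by rwa [add_right_comm]
    have hkw' : G.Adj (u + 1 + (t - 1 : ℕ)) (u + 1 + (η - 1 : ℕ)) := by
      convert hkw.1 using 1 <;> push_cast [Nat.cast_sub (by omega : 1 ≤ t),
        Nat.cast_sub (by omega : 1 ≤ η)] <;> ring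
    have := (h.colour_of_crossing (u + 1) (by omega) (by omega) (by omega) (by omega) (by omega)
      hmeven (by omega) hY' hkw').2 (by omega)
    apply h.colour_succ_ne u
    rw [h.colour_add_one (u + 1), ← this, ← add_right_comm, hYcol, hcol]

theorem isDrumWithDegreeTwoArc (h : CondStar n G c) (hS : IsShortestChord G u m)
    (hcol : c s(u, u + m) = c s(u, u + 1)) : IsDrumWithDegreeTwoArc G u m := by
  obtain ⟨hY, hYcol⟩ := h.adj_succ_of_isShortestChord hS hcol
  refine ⟨hS.1, ⟨hY, fun e => hS.1.2.1 ?_, fun e => hS.1.2.2 ?_⟩, fun t ht htm => ?_⟩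
  · linear_combination e
  · linear_combination e
  · exact ncard_neighborSet_eq_two (by have := h.1; omega) h.adj_add_one
      (h.not_isChord_of_isShortestChord hS hcol hY hYcol ht htm)

end CondStar

/-- The reflection `x ↦ -1 - x` of the cycle maps each C-edge `{i, i+1}` to the C-edge
`{-2-i, -1-i}`, whose start has the parity of `i`, so it preserves Condition (*). -/
def cycleReflection (n : ℕ) : Equiv.Perm (ZMod (2 * n)) := Equiv.subLeft (-1)

section Reflection

variable {n : ℕ} {G : SimpleGraph (ZMod (2 * n))}

@[simp] theorem cycleReflection_apply (x : ZMod (2 * n)) : cycleReflection n x = -1 - x := rfl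

theorem isChord_comap_cycleReflection {x y : ZMod (2 * n)} :
    IsChord (G.comap (cycleReflection n)) x y ↔
      IsChord G (cycleReflection n y) (cycleReflection n x) := by
  simp only [IsChord, SimpleGraph.comap_adj, cycleReflection_apply]
  constructor <;>
    exact fun ⟨hadj, h₁, h₂⟩ => ⟨hadj.symm, fun e => h₁ (by linear_combination e),
      fun e => h₂ (by linear_combination e)⟩

theorem IsShortestChord.comap_cycleReflection {u : ZMod (2 * n)} {m : ℕ}
    (hS : IsShortestChord G u m) :
    IsShortestChord (G.comap (cycleReflection n)) (cycleReflection n (u + m)) m := by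
  refine ⟨isChord_comap_cycleReflection.mpr ?_, fun x y hxy => ?_⟩
  · convert hS.1 using 1 <;> simp only [cycleReflection_apply] <;> ring
  · have := hS.2 _ _ (isChord_comap_cycleReflection.mp hxy)
    rwa [cycleReflection_apply, cycleReflection_apply, sub_sub_sub_cancel_left] at this

theorem IsDrumWithDegreeTwoArc.of_comap_cycleReflection {w : ZMod (2 * n)} {m : ℕ}
    (hD : IsDrumWithDegreeTwoArc (G.comap (cycleReflection n)) w m) :
    IsDrumWithDegreeTwoArc G (cycleReflection n (w + m + 1)) m := by
  obtain ⟨hX, hY, hdeg⟩ := hD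
  refine ⟨?_, ?_, fun t ht htm => ?_⟩
  · convert isChord_comap_cycleReflection.mp hY using 1
    simp only [cycleReflection_apply]
    ring
  · convert isChord_comap_cycleReflection.mp hX using 1 <;>
      simp only [cycleReflection_apply] <;> ring
  · refine Eq.trans ?_ (hdeg (m + 1 - t) (by omega) (by omega))
    rw [SimpleGraph.ncard_neighborSet_comap]
    congr 2
    simp only [cycleReflection_apply]
    push_cast [Nat.cast_sub (by omega : t ≤ m + 1)]
    ring

variable {c : Sym2 (ZMod (2 * n)) → ℕ}

theorem CondStar.comap_cycleReflection (h : CondStar n G c) :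
    CondStar n (G.comap (cycleReflection n)) (c ∘ Sym2.map (cycleReflection n)) := by
  have := h.neZero
  refine ⟨h.1, fun i => ?_, h.matchingCovered.comap _, h.pmValid.comap _, fun i => ?_⟩
  · simpa [sub_add_eq_sub_sub, sub_add_cancel] using (h.adj_add_one (-1 - (i + 1))).symm
  · have hpar : (-1 - (i + 1)).val % 2 = i.val % 2 := by
      have h2 : ((-2 : ZMod (2 * n))).val % 2 = 0 := by
        rw [show (-2 : ZMod (2 * n)) = ((2 * n - 2 : ℕ) : ZMod (2 * n)) by
          rw [Nat.cast_sub (by have := h.1; omega), ZMod.natCast_self]; norm_num,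
          ZMod.val_cast_of_lt (by have := h.1; omega)]
        omega
      have := ZMod.val_add_mod_two (-1 - (i + 1)) i
      rw [show -1 - (i + 1) + i = -2 by ring] at this
      omega
    simp only [Function.comp, Sym2.map_mk, cycleReflection_apply]
    rw [Sym2.eq_swap, show -1 - i = -1 - (i + 1) + 1 by ring, h.colour_add_one]
    exact cycleColour_congr hpar

theorem CondStar.colour_comap_cycleReflection (h : CondStar n G c) {u : ZMod (2 * n)} {m : ℕ}
    (hS : IsShortestChord G u m) (hcol : c s(u, u + m) ≠ c s(u, u + 1)) :
    (c ∘ Sym2.map (cycleReflection n))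
        s(cycleReflection n (u + m), cycleReflection n (u + m) + m) =
      (c ∘ Sym2.map (cycleReflection n))
        s(cycleReflection n (u + m), cycleReflection n (u + m) + 1) := by
  have := h.neZero
  obtain ⟨hm2, -⟩ := hS.bounds
  have hmeven := h.even_of_isShortestChord hS
  have hm1 : u + m = u + (m - 1 : ℕ) + 1 := by
    push_cast [Nat.cast_sub (by omega : 1 ≤ m)]; ring
  simp only [Function.comp, Sym2.map_mk, cycleReflection_apply]
  rw [show -1 - (-1 - (u + m)) = u + m by ring, show -1 - (-1 - (u + m) + m) = u by ring,
    show -1 - (-1 - (u + m) + 1) = u + (m - 1 : ℕ) by rw [hm1]; ring, Sym2.eq_swap]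
  conv_rhs => rw [Sym2.eq_swap, hm1, h.colour_add_one]
  refine cycleColour_eq_of_ne (k := u.val) ?_ (h.colour_mem_Icc hS.1.1)
    (by rwa [← h.colour_add_one u])
  rw [ZMod.val_add_natCast_mod_two]
  omega

end Reflection

theorem IsDrumWithDegreeTwoArc.exists_drum {n : ℕ} [NeZero n] {G : SimpleGraph (ZMod (2 * n))}
    {w : ZMod (2 * n)} {m : ℕ} (hD : IsDrumWithDegreeTwoArc G w m) (hm : m < 2 * n)
    (hmeven : m % 2 = 0) :
    ∃ u v : ZMod (2 * n), s(u, v) ∈ G.edgeSet ∧ s(u + 1, v + 1) ∈ G.edgeSet ∧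
      IsDrum n (s(u, v)) (s(u + 1, v + 1)) ∧
      ((∀ k : ZMod (2 * n), InArc n (u + 1) v k → (G.neighborSet k).ncard = 2) ∨
       (∀ k : ZMod (2 * n), InArc n (v + 1) u k → (G.neighborSet k).ncard = 2)) := by
  have hbounds := hD.1.val_sub_bounds
  rw [add_sub_cancel_left, ZMod.val_cast_of_lt hm] at hbounds
  have hone : (1 : ZMod (2 * n)).val = 1 := by
    simpa using ZMod.val_cast_of_lt (n := 2 * n) (a := 1) (by omega)
  have hback : (w - (w + m)).val = 2 * n - m := by
    rw [show w - (w + m) = ((2 * n - m : ℕ) : ZMod (2 * n)) by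
      rw [Nat.cast_sub hm.le, ZMod.natCast_self]; ring, ZMod.val_cast_of_lt (by omega)]
  refine ⟨w, w + m, hD.1.1, hD.2.1.1,
    ⟨⟨w, w + m, rfl, ?_⟩, ⟨w + 1, w + m + 1, rfl, ?_⟩,
      ⟨w, w + m, w + 1, w + m + 1, rfl, rfl, ?_, ?_⟩, w, w + m, Or.inl ⟨rfl, rfl⟩⟩,
    Or.inl ?_⟩
  · rw [ZMod.val_add_natCast_mod_two]; omega
  · rw [add_right_comm, ZMod.val_add_natCast_mod_two]; omega
  · simp only [InArc, add_sub_cancel_left, hone, ZMod.val_cast_of_lt hm]; omega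
  · simp only [InArc, add_sub_cancel_left, hone, hback]; omega
  · intro k ⟨hk0, hk⟩
    set s := (k - (w + 1)).val
    have hm1 : (w + m - (w + 1)).val = m - 1 := by
      simpa using ZMod.val_add_natCast_sub_add_natCast w (s := m) (t := 1) (by omega) hm
    rw [hm1] at hk
    have hk' : k = w + (s + 1 : ℕ) := by
      rw [Nat.cast_succ, add_comm (s : ZMod (2 * n)), ← add_assoc]; simp [s]
    exact hk' ▸ hD.2.2 (s + 1) (by omega) (by omega)

theorem statement_10 (n : ℕ) (G : SimpleGraph (ZMod (2 * n)))
    (c : Sym2 (ZMod (2 * n)) → ℕ) (h : CondStar n G c)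
    (hnotcycle : ∃ e ∈ G.edgeSet, ¬ IsCEdge n e) :
    ∃ u v : ZMod (2 * n), s(u, v) ∈ G.edgeSet ∧ s(u + 1, v + 1) ∈ G.edgeSet ∧
      IsDrum n (s(u, v)) (s(u + 1, v + 1)) ∧
      ((∀ k : ZMod (2 * n), InArc n (u + 1) v k → (G.neighborSet k).ncard = 2) ∨
       (∀ k : ZMod (2 * n), InArc n (v + 1) u k → (G.neighborSet k).ncard = 2)) := by
  have := h.neZero
  obtain ⟨e, he, hnc⟩ := hnotcycle
  obtain ⟨x, y, hxy⟩ := exists_isChord_of_not_isCEdge he hnc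
  obtain ⟨u, m, hS⟩ := exists_isShortestChord hxy
  obtain ⟨w, hw⟩ : ∃ w, IsDrumWithDegreeTwoArc G w m := by
    by_cases hcol : c s(u, u + m) = c s(u, u + 1)
    · exact ⟨u, h.isDrumWithDegreeTwoArc hS hcol⟩
    · exact ⟨_, (h.comap_cycleReflection.isDrumWithDegreeTwoArc hS.comap_cycleReflection
        (h.colour_comap_cycleReflection hS hcol)).of_comap_cycleReflection⟩
  exact hw.exists_drum hS.lt (h.even_of_isShortestChord hS)
end

section
/- Let G be a finite simple matching covered graph on vertex set ZMod (2n) with n ≥ 3 that contains every C-edge {i, i+1}, and suppose G satisfies Property 1, Property 2 and Property 3 with respect to this labelling. Then G admits a PMValid 2-edge-colouring, and μ(G) = 2. -/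
/-- Property 1: every edge of `G` is a C-edge or a legal edge. -/
def Property1 (n : ℕ) (G : SimpleGraph (ZMod (2 * n))) : Prop :=
  ∀ e ∈ G.edgeSet, IsCEdge n e ∨ IsLegal n e

/-- Property 2: every pair of crossing edges of `G` forms a drum. -/
def Property2 (n : ℕ) (G : SimpleGraph (ZMod (2 * n))) : Prop :=
  ∀ e ∈ G.edgeSet, ∀ e' ∈ G.edgeSet, Crosses n e e' → IsDrum n e e'

/-- Property 3: for every legal edge `e` of `G` there is exactly one edge `e'` of `G`
such that `{e, e'}` is a drum. -/
def Property3 (n : ℕ) (G : SimpleGraph (ZMod (2 * n))) : Prop :=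
  ∀ e ∈ G.edgeSet, IsLegal n e → ∃! e' : Sym2 (ZMod (2 * n)), e' ∈ G.edgeSet ∧ IsDrum n e e'

/-!
An edge has phase `p` if it is a C-edge `{i, i + 1}` with `i ≡ p (mod 2)`, or an edge of a drum
`{u, v}, {u + 1, v + 1}` of `G` with `u ≡ p`. A perfect matching `M` containing a legal edge `e`
contains a whole drum: the arc strictly inside `e` has an odd number of vertices, so some edge of
`M` leaves it, crosses `e`, and forms a drum with `e` by Property 2. Replacing that drum by its two
C-edges gives a perfect matching with fewer legal edges; iterating ends in one of the two perfect
matchings of C-edges. Hence all edges of `M` share a phase, which is unique by Property 3, so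
colouring by phase is PMValid with two colours. Conversely, `M` and its switch share an edge
(there are `2n > 4` vertices), so a PMValid colouring gives every perfect matching the colour of
one of the two C-edge matchings and uses at most two colours.
-/

open Classical in
noncomputable def mate {W : Type*} (M : Set (Sym2 W)) (v : W) : W :=
  if h : ∃ w, s(v, w) ∈ M then h.choose else v

namespace IsPerfectMatching

variable {W : Type*} {G : SimpleGraph W} {M : Set (Sym2 W)}

theorem eq_of_mem_s12 (hM : IsPerfectMatching G M) {v : W} {e f : Sym2 W} (he : e ∈ M) (hf : f ∈ M)
    (hve : v ∈ e) (hvf : v ∈ f) : e = f :=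
  (hM.2 v).unique ⟨he, hve⟩ ⟨hf, hvf⟩

theorem swap (hM : IsPerfectMatching G M) {a b c d : W} (hab : s(a, b) ∈ M) (hcd : s(c, d) ∈ M)
    (hne : s(a, b) ≠ s(c, d)) (hac : G.Adj a c) (hbd : G.Adj b d) :
    IsPerfectMatching G (insert s(a, c) (insert s(b, d) (M \ {s(a, b), s(c, d)}))) := by
  have hab' : a ≠ b := (G.mem_edgeSet.1 (hM.1 hab)).ne
  have hcd' : c ≠ d := (G.mem_edgeSet.1 (hM.1 hcd)).ne
  have hdisj : ∀ x ∈ s(a, b), x ∉ s(c, d) := fun x hx hx' => hne (hM.eq_of_mem_s12 hab hcd hx hx')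
  refine ⟨?_, fun v => ?_⟩
  · rintro e (rfl | rfl | ⟨he, -⟩)
    exacts [hac, hbd, hM.1 he]
  have at_ab : ∀ f ∈ M, v ∈ f → v ∈ s(a, b) → f = s(a, b) := fun f hf hvf hv =>
    hM.eq_of_mem_s12 hf hab hvf hv
  have at_cd : ∀ f ∈ M, v ∈ f → v ∈ s(c, d) → f = s(c, d) := fun f hf hvf hv =>
    hM.eq_of_mem_s12 hf hcd hvf hv
  obtain ⟨e, ⟨he, hve⟩, heu⟩ := hM.2 v
  simp only [Sym2.mem_iff] at hdisj at_ab at_cd hve ⊢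
  simp only [Set.mem_insert_iff, Set.mem_sdiff, Set.mem_singleton_iff]
  by_cases hv : v = a ∨ v = c
  · refine ⟨s(a, c), ⟨Or.inl rfl, by simpa using hv⟩, ?_⟩
    rintro f ⟨rfl | rfl | ⟨hf, hf'⟩, hvf⟩
    · rfl
    · simp only [Sym2.mem_iff] at hvf; grind
    · grind
  by_cases hv' : v = b ∨ v = d
  · refine ⟨s(b, d), ⟨Or.inr (Or.inl rfl), by simpa using hv'⟩, ?_⟩
    rintro f ⟨rfl | rfl | ⟨hf, hf'⟩, hvf⟩
    · simp only [Sym2.mem_iff] at hvf; grind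
    · rfl
    · grind
  · refine ⟨e, ⟨Or.inr (Or.inr ⟨he, ?_⟩), hve⟩, ?_⟩
    · rintro (rfl | rfl) <;> simp only [Sym2.mem_iff] at hve <;> tauto
    rintro f ⟨rfl | rfl | ⟨hf, -⟩, hvf⟩
    · simp only [Sym2.mem_iff] at hvf; tauto
    · simp only [Sym2.mem_iff] at hvf; tauto
    · exact heu f ⟨hf, hvf⟩

theorem mate_mem (hM : IsPerfectMatching G M) (v : W) : s(v, mate M v) ∈ M := by
  obtain ⟨e, ⟨he, hve⟩, -⟩ := hM.2 v
  obtain ⟨w, rfl⟩ := Sym2.mem_iff_exists.1 hve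
  have h : ∃ w, s(v, w) ∈ M := ⟨w, he⟩
  rw [mate, dif_pos h]
  exact h.choose_spec

theorem mate_eq_of_mem (hM : IsPerfectMatching G M) {v w : W} (h : s(v, w) ∈ M) :
    mate M v = w :=
  Sym2.congr_right.1 (hM.eq_of_mem_s12 (hM.mate_mem v) h (Sym2.mem_mk_left _ _) (Sym2.mem_mk_left _ _))

theorem mate_mate (hM : IsPerfectMatching G M) (v : W) : mate M (mate M v) = v :=
  hM.mate_eq_of_mem (Sym2.eq_swap ▸ hM.mate_mem v)

theorem mate_ne (hM : IsPerfectMatching G M) (v : W) : mate M v ≠ v :=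
  (G.mem_edgeSet.1 (hM.1 (hM.mate_mem v))).ne'

end IsPerfectMatching

theorem ZMod.val_sub_eq_ite {N : ℕ} [NeZero N] (x y : ZMod N) :
    (x - y).val = if y.val ≤ x.val then x.val - y.val else x.val + N - y.val := by
  split_ifs with h
  · exact ZMod.val_sub h
  · have := ZMod.val_add (x - y) y
    rw [sub_add_cancel] at this
    have h1 := (x - y).val_lt
    have h2 := y.val_lt
    have hN : N ≤ (x - y).val + y.val := by
      by_contra hlt
      rw [Nat.mod_eq_of_lt (by omega)] at this
      omega
    rw [Nat.mod_eq_sub_mod hN, Nat.mod_eq_of_lt (by omega)] at this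
    omega

theorem ZMod.add_natCast_ne_self {N : ℕ} (a : ZMod N) {k : ℕ} (h0 : 0 < k) (hk : k < N) :
    a + k ≠ a := by
  rw [Ne, add_eq_left, ZMod.natCast_eq_zero_iff]
  exact Nat.not_dvd_of_pos_of_lt h0 hk

theorem Finset.exists_fixed_of_involution_of_odd_card {α : Type*} (s : Finset α) (f : α → α)
    (hs : ∀ x ∈ s, f x ∈ s) (hf : ∀ x ∈ s, f (f x) = x) (hodd : ¬ 2 ∣ s.card) :
    ∃ x ∈ s, f x = x := by
  classical
  let φ : s → s := fun x => ⟨f x, hs x x.2⟩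
  have hφ : Function.Involutive φ := fun x => Subtype.ext (hf x x.2)
  obtain ⟨x, hx⟩ := Equiv.Perm.exists_fixed_point_of_prime (p := 2) (n := 1) (σ := hφ.toPerm _)
    (by simpa using hodd) (by ext x; simp [sq, hφ x])
  exact ⟨x, x.2, congrArg Subtype.val hx⟩

section Arcs

variable {n : ℕ}

theorem ZMod.val_add_one_mod_two [NeZero n] (x : ZMod (2 * n)) :
    (x + 1).val % 2 = (x.val + 1) % 2 := by
  have : Fact (1 < 2 * n) := ⟨by have := NeZero.pos n; omega⟩
  rw [ZMod.val_add, ZMod.val_one, Nat.mod_mod_of_dvd _ (dvd_mul_right 2 n)]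

theorem ZMod.val_sub_mod_two [NeZero n] (x y : ZMod (2 * n)) :
    (x - y).val % 2 = (x.val + y.val) % 2 := by
  have := x.val_lt; have := y.val_lt
  rw [ZMod.val_sub_eq_ite]; split_ifs <;> omega

theorem inArc_of_not_inArc [NeZero n] {a b y : ZMod (2 * n)} (hab : a ≠ b) (hya : y ≠ a)
    (hyb : y ≠ b) (h : ¬ InArc n a b y) : InArc n b a y := by
  rw [← (ZMod.val_injective _).ne_iff] at hab hya hyb
  have := a.val_lt; have := b.val_lt; have := y.val_lt
  simp only [InArc, ZMod.val_sub_eq_ite] at h ⊢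
  split_ifs at h ⊢ <;> omega

theorem Crosses.symm [NeZero n] {e e' : Sym2 (ZMod (2 * n))} (h : Crosses n e e') :
    Crosses n e' e := by
  obtain ⟨a, b, x, y, rfl, rfl, hx, hy⟩ := h
  refine ⟨y, x, a, b, Sym2.eq_swap, rfl, ?_, ?_⟩ <;>
  · have := a.val_lt; have := b.val_lt; have := x.val_lt; have := y.val_lt
    simp only [InArc, ZMod.val_sub_eq_ite] at hx hy ⊢
    split_ifs at hx hy ⊢ <;> omega

theorem card_inArc [NeZero n] (a b : ZMod (2 * n)) [DecidablePred (InArc n a b)] :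
    (Finset.univ.filter (InArc n a b)).card = (b - a).val - 1 := by
  rw [show (b - a).val - 1 = (Finset.Ioo 0 (b - a).val).card by simp]
  refine Finset.card_nbij' (fun x => (x - a).val) (fun t => a + t) ?_ ?_ ?_ ?_
  · intro x hx
    simpa [InArc] using hx
  · intro t ht
    have ht' := Finset.mem_Ioo.1 ht
    have := (b - a).val_lt
    simpa only [Finset.coe_filter, Set.mem_ofPred_eq, Finset.mem_univ, true_and, InArc,
      add_sub_cancel_left, ZMod.val_cast_of_lt (show t < 2 * n by omega)] using ht'
  · intro x _
    simp
  · intro t ht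
    have ht' := Finset.mem_Ioo.1 ht
    have := (b - a).val_lt
    simp [ZMod.val_cast_of_lt (show t < 2 * n by omega)]

end Arcs

section Drums

variable {n : ℕ}

theorem IsLegal.val_mod_two_eq {a b : ZMod (2 * n)} (h : IsLegal n s(a, b)) :
    a.val % 2 = b.val % 2 := by
  obtain ⟨x, y, hxy, hp⟩ := h
  rcases Sym2.eq_iff.1 hxy with ⟨rfl, rfl⟩ | ⟨rfl, rfl⟩
  exacts [hp, hp.symm]

theorem not_isLegal_cEdge [NeZero n] (i : ZMod (2 * n)) : ¬ IsLegal n s(i, i + 1) := fun h => by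
  have := h.val_mod_two_eq
  rw [ZMod.val_add_one_mod_two] at this
  omega

theorem IsDrum.symm [NeZero n] {e e' : Sym2 (ZMod (2 * n))} (h : IsDrum n e e') : IsDrum n e' e :=
  let ⟨hl, hl', hc, u, v, huv⟩ := h
  ⟨hl', hl, hc.symm, u, v, huv.symm⟩

theorem IsDrum.eq_or_eq {a b : ZMod (2 * n)} {e : Sym2 (ZMod (2 * n))} (h : IsDrum n s(a, b) e) :
    e = s(a + 1, b + 1) ∨ e = s(a - 1, b - 1) := by
  obtain ⟨-, -, -, u, v, ⟨huv, rfl⟩ | ⟨rfl, huv⟩⟩ := h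
  · left
    rcases Sym2.eq_iff.1 huv with ⟨rfl, rfl⟩ | ⟨rfl, rfl⟩
    exacts [rfl, Sym2.eq_swap]
  · right
    rcases Sym2.eq_iff.1 huv with ⟨rfl, rfl⟩ | ⟨rfl, rfl⟩
    · simp
    · simp [Sym2.eq_swap]

variable {G : SimpleGraph (ZMod (2 * n))} {M : Set (Sym2 (ZMod (2 * n)))}

/-- The arc strictly between the ends of a legal edge has an odd number of vertices, so the
matching cannot pair them among themselves. -/
theorem exists_crosses_of_isLegal [NeZero n] (hM : IsPerfectMatching G M) {a b : ZMod (2 * n)}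
    (hab : s(a, b) ∈ M) (hleg : IsLegal n s(a, b)) : ∃ e ∈ M, Crosses n s(a, b) e := by
  classical
  have hne : a ≠ b := (G.mem_edgeSet.1 (hM.1 hab)).ne
  set arc := Finset.univ.filter (InArc n a b)
  have hodd : ¬ 2 ∣ arc.card := by
    have heven := ZMod.val_sub_mod_two b a
    have hpos : (b - a).val ≠ 0 := (ZMod.val_ne_zero _).2 (sub_ne_zero.2 hne.symm)
    have := hleg.val_mod_two_eq
    rw [card_inArc]
    omega
  by_contra! hno
  have hmate_a : mate M a = b := hM.mate_eq_of_mem hab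
  have hmate_b : mate M b = a := hM.mate_eq_of_mem (Sym2.eq_swap ▸ hab)
  have hclosed : ∀ x ∈ arc, mate M x ∈ arc := by
    intro x hx
    rw [Finset.mem_filter] at hx ⊢
    refine ⟨Finset.mem_univ _, ?_⟩
    by_contra hy
    refine hno _ (hM.mate_mem x)
      ⟨a, b, x, mate M x, rfl, rfl, hx.2, inArc_of_not_inArc hne ?_ ?_ hy⟩
    · rintro h
      have := hM.mate_mate x
      rw [h, hmate_a] at this
      subst this
      exact lt_irrefl _ hx.2.2
    · rintro h
      have := hM.mate_mate x
      rw [h, hmate_b] at this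
      subst this
      simp [InArc] at hx
  obtain ⟨x, -, hfix⟩ := Finset.exists_fixed_of_involution_of_odd_card _ (mate M) hclosed
    (fun x _ => hM.mate_mate x) hodd
  exact hM.mate_ne x hfix

theorem exists_drum_of_isLegal [NeZero n] (h2 : Property2 n G) (hM : IsPerfectMatching G M)
    {e : Sym2 (ZMod (2 * n))} (he : e ∈ M) (hleg : IsLegal n e) :
    ∃ u v, s(u, v) ∈ M ∧ s(u + 1, v + 1) ∈ M ∧ IsDrum n s(u, v) s(u + 1, v + 1) := by
  obtain ⟨a, b, rfl, -⟩ := id hleg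
  obtain ⟨f, hf, hcross⟩ := exists_crosses_of_isLegal hM he hleg
  have hdrum := h2 _ (hM.1 he) _ (hM.1 hf) hcross
  rcases hdrum.eq_or_eq with rfl | rfl
  · exact ⟨a, b, he, hf, hdrum⟩
  · refine ⟨a - 1, b - 1, hf, ?_⟩
    simp only [sub_add_cancel]
    exact ⟨he, hdrum.symm⟩

end Drums

section CycleMatchings

variable {n : ℕ} {G : SimpleGraph (ZMod (2 * n))} {M : Set (Sym2 (ZMod (2 * n)))}

def cycleMatching (n p : ℕ) : Set (Sym2 (ZMod (2 * n))) :=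
  {e | ∃ i : ZMod (2 * n), e = s(i, i + 1) ∧ i.val % 2 = p}

theorem isPerfectMatching_cycleMatching [NeZero n] (hC : ∀ i, G.Adj i (i + 1)) {p : ℕ}
    (hp : p < 2) : IsPerfectMatching G (cycleMatching n p) := by
  refine ⟨fun e ⟨i, he, _⟩ => he ▸ hC i, fun v => ?_⟩
  have hsucc := ZMod.val_add_one_mod_two (n := n)
  by_cases hv : v.val % 2 = p
  · refine ⟨s(v, v + 1), ⟨⟨v, rfl, hv⟩, Sym2.mem_mk_left _ _⟩, ?_⟩
    rintro e' ⟨⟨i, rfl, hip⟩, hv'⟩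
    rcases Sym2.mem_iff.1 hv' with rfl | rfl
    · rfl
    · have := hsucc i
      omega
  · have hpar : (v - 1).val % 2 = p := by
      have := hsucc (v - 1)
      rw [sub_add_cancel] at this
      omega
    refine ⟨s(v - 1, v), ⟨⟨v - 1, by rw [sub_add_cancel], hpar⟩, Sym2.mem_mk_right _ _⟩, ?_⟩
    rintro e' ⟨⟨i, rfl, hip⟩, hv'⟩
    rcases Sym2.mem_iff.1 hv' with rfl | rfl
    · exact absurd hip hv
    · rw [add_sub_cancel_right]

theorem IsPerfectMatching.exists_subset_cycleMatching (hn : 2 ≤ n) (hM : IsPerfectMatching G M)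
    (hCM : ∀ e ∈ M, IsCEdge n e) : ∃ p, M ⊆ cycleMatching n p := by
  classical
  have : NeZero n := ⟨by omega⟩
  have hstep : ∀ v : ZMod (2 * n), s(v + 1, v + 1 + 1) ∈ M ↔ s(v, v + 1) ∉ M := by
    intro v
    constructor
    · intro h h'
      rcases Sym2.eq_iff.1 (hM.eq_of_mem_s12 h h' (Sym2.mem_mk_left _ _) (Sym2.mem_mk_right _ _))
        with ⟨h1, -⟩ | ⟨-, h2⟩
      · exact ZMod.add_natCast_ne_self v (k := 1) one_pos (by omega) (by simpa using h1)
      · exact ZMod.add_natCast_ne_self v (k := 2) two_pos (by omega)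
          (by push_cast; exact (by ring : v + 2 = v + 1 + 1).trans h2)
    · intro h
      obtain ⟨i, hi⟩ := hCM _ (hM.mate_mem (v + 1))
      rcases Sym2.eq_iff.1 hi with ⟨rfl, hw⟩ | ⟨hv, hw⟩
      · exact hw ▸ hM.mate_mem (v + 1)
      · obtain rfl := add_right_cancel hv
        exact absurd (hw ▸ hM.mate_mem (v + 1)) (by rwa [Sym2.eq_swap])
  have hind : ∀ k : ℕ, s((k : ZMod (2 * n)), k + 1) ∈ M ↔ (s(0, 0 + 1) ∈ M ↔ k % 2 = 0) := by
    intro k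
    induction k with
    | zero => simp
    | succ k ih =>
      rw [Nat.cast_succ, hstep, ih, show (k + 1) % 2 = 0 ↔ ¬ k % 2 = 0 by omega]
      tauto
  refine ⟨if s(0, 0 + 1) ∈ M then 0 else 1, fun e he => ?_⟩
  obtain ⟨i, rfl⟩ := hCM e he
  refine ⟨i, rfl, ?_⟩
  have := (hind i.val).1 (by rwa [ZMod.natCast_zmod_val])
  by_cases h0 : s(0, 0 + 1) ∈ M
  · rw [if_pos h0]
    exact this.1 h0
  · rw [if_neg h0]
    have := mt this.2 h0
    omega

end CycleMatchings

section Switch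

variable {n : ℕ} {G : SimpleGraph (ZMod (2 * n))} {M : Set (Sym2 (ZMod (2 * n)))}

def drumSwitch (M : Set (Sym2 (ZMod (2 * n)))) (u v : ZMod (2 * n)) : Set (Sym2 (ZMod (2 * n))) :=
  insert s(u, u + 1) (insert s(v, v + 1) (M \ {s(u, v), s(u + 1, v + 1)}))

theorem isPerfectMatching_drumSwitch [NeZero n] (hC : ∀ i, G.Adj i (i + 1))
    (hM : IsPerfectMatching G M) {u v : ZMod (2 * n)} (huv : s(u, v) ∈ M)
    (huv' : s(u + 1, v + 1) ∈ M) (hleg : IsLegal n s(u, v)) :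
    IsPerfectMatching G (drumSwitch M u v) := by
  refine hM.swap huv huv' (fun h => ?_) (hC u) (hC v)
  have hu := ZMod.val_add_one_mod_two u
  have hv := ZMod.val_add_one_mod_two v
  have := hleg.val_mod_two_eq
  rcases Sym2.eq_iff.1 h with ⟨h1, -⟩ | ⟨h1, h2⟩
  · rw [← h1] at hu; omega
  · rw [← h1] at hv; omega

theorem ncard_legal_drumSwitch_lt [NeZero n] {u v : ZMod (2 * n)} (huv : s(u, v) ∈ M)
    (hleg : IsLegal n s(u, v)) :
    {e ∈ drumSwitch M u v | IsLegal n e}.ncard < {e ∈ M | IsLegal n e}.ncard := by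
  refine Set.ncard_lt_ncard ((Set.ssubset_iff_of_subset ?_).2 ⟨s(u, v), ⟨huv, hleg⟩, ?_⟩)
  · rintro e ⟨rfl | rfl | ⟨he, -⟩, hleg'⟩
    · exact absurd hleg' (not_isLegal_cEdge u)
    · exact absurd hleg' (not_isLegal_cEdge v)
    · exact ⟨he, hleg'⟩
  · rintro ⟨h | h | ⟨-, h⟩, -⟩
    · exact not_isLegal_cEdge u (h ▸ hleg)
    · exact not_isLegal_cEdge v (h ▸ hleg)
    · exact h (Set.mem_insert _ _)

theorem IsPerfectMatching.induction_on_drums (hn : 2 ≤ n) (hC : ∀ i, G.Adj i (i + 1))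
    (h1 : Property1 n G) (h2 : Property2 n G) {P : Set (Sym2 (ZMod (2 * n))) → Prop}
    (base : ∀ M p, M ⊆ cycleMatching n p → P M)
    (step : ∀ M u v, IsPerfectMatching G M → s(u, v) ∈ M → s(u + 1, v + 1) ∈ M →
      IsDrum n s(u, v) s(u + 1, v + 1) → P (drumSwitch M u v) → P M)
    (hM : IsPerfectMatching G M) : P M := by
  have : NeZero n := ⟨by omega⟩
  induction hk : {e ∈ M | IsLegal n e}.ncard using Nat.strong_induction_on generalizing M with
  | _ k ih =>
  by_cases hL : ∃ e ∈ M, IsLegal n e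
  · obtain ⟨e, he, hleg⟩ := hL
    obtain ⟨u, v, huv, huv', hd⟩ := exists_drum_of_isLegal h2 hM he hleg
    exact step M u v hM huv huv' hd (ih _ (hk ▸ ncard_legal_drumSwitch_lt huv hd.1)
      (isPerfectMatching_drumSwitch hC hM huv huv' hd.1) rfl)
  · push Not at hL
    obtain ⟨p, hp⟩ := hM.exists_subset_cycleMatching hn
      fun e he => (h1 e (hM.1 he)).resolve_right (hL e he)
    exact base M p hp

end Switch

section Phase

variable {n : ℕ} {G : SimpleGraph (ZMod (2 * n))} {M : Set (Sym2 (ZMod (2 * n)))}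

theorem cEdge_injective (hn : 2 ≤ n) {i j : ZMod (2 * n)} (h : s(i, i + 1) = s(j, j + 1)) :
    i = j := by
  rcases Sym2.eq_iff.1 h with ⟨h1, -⟩ | ⟨h1, h2⟩
  · exact h1
  · refine absurd ?_ (ZMod.add_natCast_ne_self j (k := 2) two_pos (by omega))
    calc j + ((2 : ℕ) : ZMod (2 * n)) = j + 1 + 1 := by push_cast; ring
      _ = j := by rw [← h1, h2]

theorem IsLegal.val_mod_two_eq_of_eq {a b a' b' : ZMod (2 * n)} (hleg : IsLegal n s(a, b))
    (h : s(a, b) = s(a', b')) : a.val % 2 = a'.val % 2 := by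
  have := hleg.val_mod_two_eq
  rcases Sym2.eq_iff.1 h with ⟨rfl, -⟩ | ⟨-, rfl⟩
  exacts [rfl, this]

def PhaseEdge (n : ℕ) (G : SimpleGraph (ZMod (2 * n))) (p : ℕ) (e : Sym2 (ZMod (2 * n))) :
    Prop :=
  e ∈ cycleMatching n p ∨
  ∃ u v : ZMod (2 * n), u.val % 2 = p ∧ s(u, v) ∈ G.edgeSet ∧ s(u + 1, v + 1) ∈ G.edgeSet ∧
    IsDrum n s(u, v) s(u + 1, v + 1) ∧ (e = s(u, v) ∨ e = s(u + 1, v + 1))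

theorem PhaseEdge.val_mod_two_of_cEdge (hn : 2 ≤ n) {p : ℕ} {u : ZMod (2 * n)}
    (h : PhaseEdge n G p s(u, u + 1)) : u.val % 2 = p := by
  have : NeZero n := ⟨by omega⟩
  rcases h with ⟨i, hi, rfl⟩ | ⟨a, b, -, -, -, hd, he | he⟩
  · rw [cEdge_injective hn hi]
  · exact absurd (he ▸ hd.1) (not_isLegal_cEdge u)
  · exact absurd (he ▸ hd.2.1) (not_isLegal_cEdge u)

/-- By Property 3 the two drums would be shifts of each other by `2`. -/
theorem not_lower_eq_upper (hn : 3 ≤ n) (h3 : Property3 n G) {u v u' v' : ZMod (2 * n)}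
    (hE : s(u, v) ∈ G.edgeSet) (hE' : s(u + 1, v + 1) ∈ G.edgeSet) (hF : s(u', v') ∈ G.edgeSet)
    (hd : IsDrum n s(u, v) s(u + 1, v + 1)) (hd' : IsDrum n s(u', v') s(u' + 1, v' + 1))
    (h : s(u, v) = s(u' + 1, v' + 1)) : False := by
  have : NeZero n := ⟨by omega⟩
  have hpartner : s(u + 1, v + 1) = s(u', v') :=
    (h3 _ hE hd.1).unique ⟨hE', hd⟩ ⟨hF, h ▸ hd'.symm⟩
  have hshift : s(u, v) = s(u + 2, v + 2) := by
    rw [h, ← Sym2.map_mk (· + 1), ← hpartner, Sym2.map_mk]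
    ring_nf
  rcases Sym2.eq_iff.1 hshift with ⟨h1, -⟩ | ⟨h1, h2⟩
  · exact ZMod.add_natCast_ne_self u (k := 2) two_pos (by omega) (by exact_mod_cast h1.symm)
  · refine ZMod.add_natCast_ne_self u (k := 4) (by omega) (by omega) ?_
    calc u + ((4 : ℕ) : ZMod (2 * n)) = u + 2 + 2 := by push_cast; ring
      _ = u := by rw [← h2, ← h1]

theorem PhaseEdge.eq (hn : 3 ≤ n) (h3 : Property3 n G) {p q : ℕ} {e : Sym2 (ZMod (2 * n))}
    (hp : PhaseEdge n G p e) (hq : PhaseEdge n G q e) : p = q := by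
  have : NeZero n := ⟨by omega⟩
  rcases id hp with ⟨i, rfl, rfl⟩ | ⟨u, v, rfl, hE, hE', hd, he⟩
  · exact hq.val_mod_two_of_cEdge (by omega)
  rcases id hq with ⟨i, rfl, rfl⟩ | ⟨u', v', rfl, hF, hF', hd', he'⟩
  · exact (hp.val_mod_two_of_cEdge (by omega)).symm
  rcases he with rfl | rfl <;> rcases he' with h | h
  · exact hd.1.val_mod_two_eq_of_eq h
  · exact (not_lower_eq_upper hn h3 hE hE' hF hd hd' h).elim
  · exact (not_lower_eq_upper hn h3 hF hF' hE hd' hd h.symm).elim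
  · have := hd.2.1.val_mod_two_eq_of_eq h
    rw [ZMod.val_add_one_mod_two, ZMod.val_add_one_mod_two] at this
    omega

theorem IsPerfectMatching.exists_forall_phaseEdge (hn : 2 ≤ n) (hC : ∀ i, G.Adj i (i + 1))
    (h1 : Property1 n G) (h2 : Property2 n G) (hM : IsPerfectMatching G M) :
    ∃ p, ∀ e ∈ M, PhaseEdge n G p e := by
  refine hM.induction_on_drums (P := fun M => ∃ p, ∀ e ∈ M, PhaseEdge n G p e) hn hC h1 h2
    (fun M p hp => ⟨p, fun e he => Or.inl (hp he)⟩) ?_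
  rintro M u v hM huv huv' hd ⟨p, hp⟩
  have hu : u.val % 2 = p := (hp _ (Set.mem_insert _ _)).val_mod_two_of_cEdge hn
  refine ⟨p, fun e he => ?_⟩
  by_cases he' : e = s(u, v) ∨ e = s(u + 1, v + 1)
  · exact Or.inr ⟨u, v, hu, hM.1 huv, hM.1 huv', hd, he'⟩
  · exact hp e (Set.mem_insert_of_mem _ (Set.mem_insert_of_mem _ ⟨he, by simpa using he'⟩))

end Phase

section Colouring

variable {n : ℕ} {G : SimpleGraph (ZMod (2 * n))} {M : Set (Sym2 (ZMod (2 * n)))}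

theorem IsPerfectMatching.colour_eq_or_eq (hn : 3 ≤ n) (hC : ∀ i, G.Adj i (i + 1))
    (h1 : Property1 n G) (h2 : Property2 n G) {c : Sym2 (ZMod (2 * n)) → ℕ}
    (hmono : ∀ M, IsPerfectMatching G M → ∀ e ∈ M, ∀ e' ∈ M, c e = c e')
    (hM : IsPerfectMatching G M) : ∀ e ∈ M, c e = c s(0, 0 + 1) ∨ c e = c s(1, 1 + 1) := by
  have : NeZero n := ⟨by omega⟩
  have : Fact (1 < 2 * n) := ⟨by omega⟩
  refine hM.induction_on_drums
    (P := fun M => ∀ e ∈ M, c e = c s(0, 0 + 1) ∨ c e = c s(1, 1 + 1)) (by omega) hC h1 h2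
    ?_ ?_
  · rintro M p hp e he
    obtain ⟨i, rfl, rfl⟩ := hp he
    rcases Nat.mod_two_eq_zero_or_one i.val with h | h
    · exact .inl <| hmono _ (isPerfectMatching_cycleMatching hC (p := 0) two_pos) _ ⟨i, rfl, h⟩
        _ ⟨0, rfl, by simp⟩
    · exact .inr <| hmono _ (isPerfectMatching_cycleMatching hC (p := 1) one_lt_two) _
        ⟨i, rfl, h⟩ _ ⟨1, rfl, by simp [ZMod.val_one]⟩
  · rintro M u v hM huv huv' - ih e he
    obtain ⟨w, -, hw⟩ := Finset.exists_mem_notMem_of_card_lt_card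
      (s := {u, u + 1, v, v + 1}) (t := Finset.univ)
      (Finset.card_le_four.trans_lt (by rw [Finset.card_univ, ZMod.card]; omega))
    simp only [Finset.mem_insert, Finset.mem_singleton, not_or] at hw
    have hf : s(w, mate M w) ∈ drumSwitch M u v := by
      refine Set.mem_insert_of_mem _ (Set.mem_insert_of_mem _ ⟨hM.mate_mem w, ?_⟩)
      rintro (h | h) <;> have := Sym2.mem_mk_left w (mate M w) <;> rw [h] at this <;>
        simp only [Sym2.mem_iff] at this <;> tauto
    exact hmono M hM e he _ (hM.mate_mem w) ▸ ih _ hf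

theorem PMValid.le_two (hn : 3 ≤ n) (hC : ∀ i, G.Adj i (i + 1)) (h1 : Property1 n G)
    (h2 : Property2 n G) {c : Sym2 (ZMod (2 * n)) → ℕ} {k : ℕ} (hc : PMValid G c k) : k ≤ 2 := by
  have hsub : Finset.Icc 1 k ⊆ {c s(0, 0 + 1), c s(1, 1 + 1)} := by
    intro i hi
    obtain ⟨M, hM, hMi⟩ := hc.2.2 i hi
    have := hM.colour_eq_or_eq hn hC h1 h2 hc.2.1 _ (hM.mate_mem 0)
    rw [hMi _ (hM.mate_mem 0)] at this
    simpa using this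
  simpa using (Finset.card_le_card hsub).trans Finset.card_le_two

open Classical in
noncomputable def phaseColouring (n : ℕ) (G : SimpleGraph (ZMod (2 * n)))
    (e : Sym2 (ZMod (2 * n))) : ℕ :=
  if PhaseEdge n G 1 e then 1 else 2

theorem pmValid_phaseColouring (hn : 3 ≤ n) (hC : ∀ i, G.Adj i (i + 1)) (h1 : Property1 n G)
    (h2 : Property2 n G) (h3 : Property3 n G) : PMValid G (phaseColouring n G) 2 := by
  have : NeZero n := ⟨by omega⟩
  have colour_of_phaseEdge : ∀ {p e}, PhaseEdge n G p e →
      phaseColouring n G e = if p = 1 then 1 else 2 := by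
    intro p e he
    by_cases h : PhaseEdge n G 1 e
    · simp [phaseColouring, h, ← h.eq hn h3 he]
    · have : p ≠ 1 := fun hp => h (hp ▸ he)
      simp [phaseColouring, h, this]
  refine ⟨fun e _ => by unfold phaseColouring; split_ifs <;> simp, ?_, ?_⟩
  · intro M hM e he e' he'
    obtain ⟨p, hp⟩ := hM.exists_forall_phaseEdge (by omega) hC h1 h2
    rw [colour_of_phaseEdge (hp e he), colour_of_phaseEdge (hp e' he')]
  · intro i hi
    rw [Finset.mem_Icc] at hi
    refine ⟨cycleMatching n (2 - i), isPerfectMatching_cycleMatching hC (by omega), fun e he => ?_⟩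
    rw [colour_of_phaseEdge (Or.inl he)]
    split_ifs <;> omega

end Colouring

theorem statement_12_general (n : ℕ) (hn : 3 ≤ n) (G : SimpleGraph (ZMod (2 * n)))
    (hC : ∀ i : ZMod (2 * n), G.Adj i (i + 1))
    (h1 : Property1 n G) (h2 : Property2 n G) (h3 : Property3 n G) :
    (∃ c : Sym2 (ZMod (2 * n)) → ℕ, PMValid G c 2) ∧ matchingIndex G = 2 := by
  have hvalid := pmValid_phaseColouring hn hC h1 h2 h3
  have hbound : ∀ k ∈ {k | ∃ c : Sym2 (ZMod (2 * n)) → ℕ, PMValid G c k}, k ≤ 2 :=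
    fun k ⟨_, hc⟩ => hc.le_two hn hC h1 h2
  exact ⟨⟨_, hvalid⟩,
    le_antisymm (csSup_le ⟨2, _, hvalid⟩ hbound) (le_csSup ⟨2, hbound⟩ ⟨_, hvalid⟩)⟩

theorem statement_12 (n : ℕ) (hn : 3 ≤ n) (G : SimpleGraph (ZMod (2 * n)))
    (hC : ∀ i : ZMod (2 * n), G.Adj i (i + 1)) (hmc : MatchingCovered G)
    (h1 : Property1 n G) (h2 : Property2 n G) (h3 : Property3 n G) :
    (∃ c : Sym2 (ZMod (2 * n)) → ℕ, PMValid G c 2) ∧ matchingIndex G = 2 :=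
  statement_12_general n hn G hC h1 h2 h3
end

section
/- Let G be a finite simple matching covered graph with μ(G) = 2, and let v be a vertex of G. Then there exist two distinct edges e1 and e2 incident to v such that for every perfect matching M1 of G containing e1 and every perfect matching M2 of G containing e2, the matchings M1 and M2 are disjoint and their union M1 ∪ M2 is the edge set of a Hamiltonian cycle of G. -/
/-- In a cycle based at `x`, there are two distinct neighbours of `x` along the cycle. -/
lemma cycle_start_two_edges {V : Type*} {H : SimpleGraph V} {x : V} {q : H.Walk x x}
    (hq : q.IsCycle) :
    ∃ b d : V, b ≠ d ∧ s(x, b) ∈ q.edges ∧ s(x, d) ∈ q.edges := by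
  cases q with
  | nil => exact absurd hq (SimpleGraph.Walk.IsCycle.not_of_nil)
  | @cons _ b _ h p =>
    rw [SimpleGraph.Walk.cons_isCycle_iff] at hq
    obtain ⟨hp, hne⟩ := hq
    have hxb : x ≠ b := h.ne
    obtain ⟨d, hd, r', hr⟩ := SimpleGraph.Walk.exists_eq_cons_of_ne hxb p.reverse
    have hdm : s(x, d) ∈ p.reverse.edges := by rw [hr]; simp
    have hdm' : s(x, d) ∈ p.edges := by
      rw [SimpleGraph.Walk.edges_reverse, List.mem_reverse] at hdm; exact hdm
    refine ⟨b, d, ?_, ?_, ?_⟩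
    · rintro rfl; exact hne hdm'
    · simp
    · simp [hdm']

/-- In a 2-regular graph, every edge at a vertex of a cycle lies on the cycle. -/
lemma cycle_edges_closed {V : Type*} [DecidableEq V] {H : SimpleGraph V}
    (hdeg : ∀ x : V, (H.neighborSet x).ncard = 2)
    {x0 : V} {q : H.Walk x0 x0} (hq : q.IsCycle) {x y : V}
    (hx : x ∈ q.support) (hxy : H.Adj x y) :
    s(x, y) ∈ q.edges := by
  obtain ⟨b, d, hbd, hb, hd⟩ := cycle_start_two_edges (hq.rotate hx)
  have hmem : ∀ z : V, s(x, z) ∈ (q.rotate x hx).edges → s(x, z) ∈ q.edges := by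
    intro z hz
    exact (q.rotate_edges x hx).perm.mem_iff.mp hz
  have hb' := hmem b hb
  have hd' := hmem d hd
  have hsub : ({b, d} : Set V) ⊆ H.neighborSet x := by
    rintro z (rfl | rfl)
    · exact q.adj_of_mem_edges hb'
    · exact q.adj_of_mem_edges hd'
  have heq : ({b, d} : Set V) = H.neighborSet x := by
    have hfin : (H.neighborSet x).Finite :=
      Set.finite_of_ncard_ne_zero (by rw [hdeg x]; norm_num)
    exact Set.eq_of_subset_of_ncard_le hsub (by rw [hdeg x, Set.ncard_pair hbd]) hfin
  have : y ∈ ({b, d} : Set V) := heq ▸ hxy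
  rcases this with rfl | rfl
  · exact hb'
  · exact hd'

/-- A connected 2-regular graph on a nonempty finite vertex type has a Hamiltonian cycle
whose edges are exactly the edges of the graph. -/
lemma ham_of_connected_two_regular {V : Type*} [Fintype V] [DecidableEq V] [Nonempty V]
    {H : SimpleGraph V} (hconn : H.Connected)
    (hdeg : ∀ x : V, (H.neighborSet x).ncard = 2) :
    ∃ (x : V) (q : H.Walk x x), q.IsHamiltonianCycle ∧
      ∀ e : Sym2 V, e ∈ q.edges ↔ e ∈ H.edgeSet := by
  classical
  haveI : DecidableRel H.Adj := Classical.decRel _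
  have hdegree : ∀ x : V, H.degree x = 2 := by
    intro x
    rw [← hdeg x, ← SimpleGraph.card_neighborSet_eq_degree]
    rw [Set.ncard_eq_toFinset_card']
    exact (Set.toFinset_card _).symm
  -- H is not acyclic
  have hnac : ¬ H.IsAcyclic := by
    intro hac
    have htree : H.IsTree := ⟨hconn, hac⟩
    have hcard := htree.card_edgeFinset
    have hsum : Fintype.card V * 2 = 2 * H.edgeFinset.card := by
      rw [← SimpleGraph.sum_degrees_eq_twice_card_edges]
      simp [hdegree, Finset.card_univ]
    omega
  simp only [SimpleGraph.IsAcyclic, not_forall, not_not] at hnac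
  obtain ⟨x0, q, hq⟩ := hnac
  -- every vertex lies on the cycle
  have hclosed : ∀ x y : V, x ∈ q.support → H.Adj x y → s(x, y) ∈ q.edges :=
    fun x y hx hxy => cycle_edges_closed hdeg hq hx hxy
  have hsupp : ∀ y : V, y ∈ q.support := by
    have key : ∀ (a b : V), (w : H.Walk a b) → a ∈ q.support → b ∈ q.support := by
      intro a b w
      induction w with
      | nil => exact id
      | cons h p ih =>
        intro ha
        exact ih (q.snd_mem_support_of_mem_edges (hclosed _ _ ha h))
    intro y
    exact key x0 y (hconn x0 y).some q.start_mem_support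
  have hnil : ¬ q.Nil := hq.not_nil
  have htail : ∀ a : V, a ∈ q.support.tail := by
    intro a
    rcases (SimpleGraph.Walk.mem_support_iff q).mp (hsupp a) with rfl | h
    · rw [← SimpleGraph.Walk.support_tail_of_not_nil q hnil]
      exact q.tail.end_mem_support
    · exact h
  refine ⟨x0, q, ?_, ?_⟩
  · rw [SimpleGraph.Walk.isHamiltonianCycle_iff_isCycle_and_support_count_tail_eq_one]
    exact ⟨hq, fun a => List.count_eq_one_of_mem hq.support_nodup (htail a)⟩
  · intro e
    constructor
    · exact fun he => q.edges_subset_edgeSet he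
    · intro he
      induction e with
      | h x y => exact hclosed x y (hsupp x) ((H.mem_edgeSet).mp he)

lemma exists_partner {V : Type*} {G : SimpleGraph V} {M : Set (Sym2 V)}
    (hM : IsPerfectMatching G M) (x : V) :
    ∃ y : V, G.Adj x y ∧ s(x, y) ∈ M ∧ ∀ e ∈ M, x ∈ e → e = s(x, y) := by
  obtain ⟨e, ⟨heM, hxe⟩, huniq⟩ := hM.2 x
  obtain ⟨y, rfl⟩ : ∃ y, e = s(x, y) := ⟨Sym2.Mem.other hxe, (Sym2.other_spec hxe).symm⟩
  exact ⟨y, (G.mem_edgeSet).mp (hM.1 heM), heM,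
    fun e' he' hxe' => huniq e' ⟨he', hxe'⟩⟩

lemma union_hamiltonian {V : Type*} [Fintype V] [DecidableEq V] [Nonempty V]
    {G : SimpleGraph V} {M1 M2 : Set (Sym2 V)} {c : Sym2 V → ℕ}
    (hmono : ∀ M : Set (Sym2 V), IsPerfectMatching G M → ∀ e ∈ M, ∀ e' ∈ M, c e = c e')
    (hM1 : IsPerfectMatching G M1) (hM2 : IsPerfectMatching G M2)
    (hc1 : ∀ e ∈ M1, c e = 1) (hc2 : ∀ e ∈ M2, c e = 2) :
    Disjoint M1 M2 ∧ ∃ (x : V) (p : G.Walk x x), p.IsHamiltonianCycle ∧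
      ∀ e : Sym2 V, e ∈ p.edges ↔ e ∈ M1 ∪ M2 := by
  classical
  have hdisj : Disjoint M1 M2 := Set.disjoint_left.mpr fun e h1 h2 => by
    have := hc1 e h1; have := hc2 e h2; omega
  have hsubG : M1 ∪ M2 ⊆ G.edgeSet := Set.union_subset hM1.1 hM2.1
  set H : SimpleGraph V := SimpleGraph.fromEdgeSet (M1 ∪ M2) with hH
  have hadjH : ∀ a b : V, s(a, b) ∈ M1 ∪ M2 → H.Adj a b := by
    intro a b hab
    rw [hH, SimpleGraph.fromEdgeSet_adj]
    exact ⟨hab, G.ne_of_adj ((G.mem_edgeSet).mp (hsubG hab))⟩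
  have hHG : H ≤ G := by
    intro a b hab
    rw [hH, SimpleGraph.fromEdgeSet_adj] at hab
    exact (G.mem_edgeSet).mp (hsubG hab.1)
  choose f1 hf1adj hf1mem hf1uniq using fun x => exists_partner hM1 x
  choose f2 hf2adj hf2mem hf2uniq using fun x => exists_partner hM2 x
  have hf12 : ∀ x, f1 x ≠ f2 x := fun x h =>
    Set.disjoint_left.mp hdisj (hf1mem x) (by rw [h]; exact hf2mem x)
  have hnbr : ∀ x, H.neighborSet x = {f1 x, f2 x} := by
    intro x; ext y
    simp only [SimpleGraph.mem_neighborSet, Set.mem_insert_iff, Set.mem_singleton_iff]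
    constructor
    · intro h
      rw [hH, SimpleGraph.fromEdgeSet_adj] at h
      rcases h.1 with hm | hm
      · exact Or.inl (Sym2.congr_right.mp (hf1uniq x _ hm (Sym2.mem_mk_left x y)))
      · exact Or.inr (Sym2.congr_right.mp (hf2uniq x _ hm (Sym2.mem_mk_left x y)))
    · rintro (rfl | rfl)
      · exact hadjH x _ (Or.inl (hf1mem x))
      · exact hadjH x _ (Or.inr (hf2mem x))
  have hdeg : ∀ x, (H.neighborSet x).ncard = 2 := fun x => by
    rw [hnbr x]; exact Set.ncard_pair (hf12 x)
  have hpre : H.Preconnected := by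
    intro a b
    by_contra hab
    set S : Set V := {y | H.Reachable a y} with hS
    have hSadj : ∀ {p q : V}, H.Adj p q → p ∈ S → q ∈ S :=
      fun h hp => hp.trans h.reachable
    have hSadj' : ∀ {p q : V}, H.Adj p q → q ∈ S → p ∈ S :=
      fun h hq => hq.trans h.symm.reachable
    have haS : a ∈ S := SimpleGraph.Reachable.refl a
    have hbS : b ∉ S := hab
    set M3 : Set (Sym2 V) :=
      {e | e ∈ M1 ∧ ∃ z ∈ e, z ∈ S} ∪ {e | e ∈ M2 ∧ ∃ z ∈ e, z ∉ S} with hM3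
    have hM3pm : IsPerfectMatching G M3 := by
      constructor
      · rintro e (⟨he, -⟩ | ⟨he, -⟩)
        exacts [hM1.1 he, hM2.1 he]
      · intro x
        by_cases hx : x ∈ S
        · refine ⟨s(x, f1 x),
            ⟨Or.inl ⟨hf1mem x, x, Sym2.mem_mk_left x _, hx⟩, Sym2.mem_mk_left x _⟩, ?_⟩
          rintro e ⟨(⟨he, -⟩ | ⟨he, z, hze, hzS⟩), hxe⟩
          · exact hf1uniq x e he hxe
          · exfalso
            have hex : e = s(x, f2 x) := hf2uniq x e he hxe
            subst hex
            rcases Sym2.mem_iff.mp hze with rfl | rfl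
            · exact hzS hx
            · exact hzS (hSadj (hadjH x _ (Or.inr (hf2mem x))) hx)
        · refine ⟨s(x, f2 x),
            ⟨Or.inr ⟨hf2mem x, x, Sym2.mem_mk_left x _, hx⟩, Sym2.mem_mk_left x _⟩, ?_⟩
          rintro e ⟨(⟨he, z, hze, hzS⟩ | ⟨he, -⟩), hxe⟩
          · exfalso
            have hex : e = s(x, f1 x) := hf1uniq x e he hxe
            subst hex
            rcases Sym2.mem_iff.mp hze with rfl | rfl
            · exact hx hzS
            · exact hx (hSadj' (hadjH x _ (Or.inl (hf1mem x))) hzS)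
          · exact hf2uniq x e he hxe
    have hmem1 : s(a, f1 a) ∈ M3 :=
      Or.inl ⟨hf1mem a, a, Sym2.mem_mk_left a _, haS⟩
    have hmem2 : s(b, f2 b) ∈ M3 :=
      Or.inr ⟨hf2mem b, b, Sym2.mem_mk_left b _, hbS⟩
    have h1 : c s(a, f1 a) = 1 := hc1 _ (hf1mem a)
    have h2 : c s(b, f2 b) = 2 := hc2 _ (hf2mem b)
    have := hmono M3 hM3pm _ hmem1 _ hmem2
    omega
  have hconn : H.Connected := ⟨hpre⟩
  obtain ⟨x, q, hham, hedges⟩ := ham_of_connected_two_regular hconn hdeg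
  have hsub : ∀ e ∈ q.edges, e ∈ G.edgeSet :=
    fun e he => SimpleGraph.edgeSet_mono hHG (q.edges_subset_edgeSet he)
  refine ⟨hdisj, x, q.transfer G hsub, ?_, ?_⟩
  · rw [SimpleGraph.Walk.isHamiltonianCycle_iff_isCycle_and_support_count_tail_eq_one]
    rw [SimpleGraph.Walk.isHamiltonianCycle_iff_isCycle_and_support_count_tail_eq_one] at hham
    refine ⟨hham.1.transfer hsub, ?_⟩
    rw [SimpleGraph.Walk.support_transfer]
    exact hham.2
  · intro e
    rw [SimpleGraph.Walk.edges_transfer q hsub, hedges e, hH,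
      SimpleGraph.edgeSet_fromEdgeSet]
    constructor
    · exact fun h => h.1
    · intro h
      exact ⟨h, fun hd => G.not_isDiag_of_mem_edgeSet (hsubG h) hd⟩

theorem statement_15 {V : Type*} [Fintype V] [DecidableEq V] (G : SimpleGraph V)
    (hmc : MatchingCovered G) (hmu : matchingIndex G = 2) (v : V) :
    ∃ e₁ e₂ : Sym2 V, e₁ ≠ e₂ ∧ e₁ ∈ G.incidenceSet v ∧ e₂ ∈ G.incidenceSet v ∧
      ∀ M₁ M₂ : Set (Sym2 V),
        IsPerfectMatching G M₁ → e₁ ∈ M₁ → IsPerfectMatching G M₂ → e₂ ∈ M₂ →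
        Disjoint M₁ M₂ ∧
        ∃ (x : V) (p : G.Walk x x), p.IsHamiltonianCycle ∧
          ∀ e : Sym2 V, e ∈ p.edges ↔ e ∈ M₁ ∪ M₂ := by
  classical
  have h2 : ∃ c : Sym2 V → ℕ, PMValid G c 2 := by
    have hne : {k | ∃ c : Sym2 V → ℕ, PMValid G c k}.Nonempty := by
      by_contra h
      rw [Set.not_nonempty_iff_eq_empty] at h
      rw [matchingIndex, h, csSup_empty] at hmu
      simp at hmu
    have hbdd : BddAbove {k | ∃ c : Sym2 V → ℕ, PMValid G c k} := by
      by_contra h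
      rw [matchingIndex, csSup_of_not_bddAbove h, csSup_empty] at hmu
      simp at hmu
    have hmem := Nat.sSup_mem hne hbdd
    rw [matchingIndex] at hmu
    rw [hmu] at hmem
    exact hmem
  obtain ⟨c, hcIcc, hcmono, hcex⟩ := h2
  obtain ⟨N1, hN1pm, hN1col⟩ := hcex 1 (by decide)
  obtain ⟨N2, hN2pm, hN2col⟩ := hcex 2 (by decide)
  obtain ⟨e₁, ⟨he₁N, hve₁⟩, -⟩ := hN1pm.2 v
  obtain ⟨e₂, ⟨he₂N, hve₂⟩, -⟩ := hN2pm.2 v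
  have hc₁ : c e₁ = 1 := hN1col e₁ he₁N
  have hc₂ : c e₂ = 2 := hN2col e₂ he₂N
  haveI : Nonempty V := ⟨v⟩
  refine ⟨e₁, e₂, ?_, ⟨hN1pm.1 he₁N, hve₁⟩, ⟨hN2pm.1 he₂N, hve₂⟩, ?_⟩
  · intro h
    rw [h, hc₂] at hc₁
    omega
  · intro M₁ M₂ hM₁ he₁M hM₂ he₂M
    have hcol1 : ∀ e ∈ M₁, c e = 1 := fun e he =>
      (hcmono M₁ hM₁ e he e₁ he₁M).trans hc₁
    have hcol2 : ∀ e ∈ M₂, c e = 2 := fun e he =>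
      (hcmono M₂ hM₂ e he e₂ he₂M).trans hc₂
    exact union_hamiltonian hcmono hM₁ hM₂ hcol1 hcol2
end

section
/- Let G be a finite simple graph and suppose the pair (c, w) of a generalized edge-colouring and a weighting of G is k-valid for some k ≥ 1. Then every vertex of G has degree at least k. Consequently μ̄(G) ≤ δ(G), the minimum degree of G. -/
/-- The weight of a set of edges (e.g. of a perfect matching): the product of its
edge weights. -/
noncomputable def pmWeight {V : Type*} (w : Sym2 V → ℂ) (M : Set (Sym2 V)) : ℂ :=
  ∏ᶠ e ∈ M, w e

/-- The weight of a graph: the sum of the weights of its perfect matchings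
(`0` if it has none). -/
noncomputable def graphWeight {V : Type*} (G : SimpleGraph V) (w : Sym2 V → ℂ) : ℂ :=
  ∑ᶠ M ∈ {M : Set (Sym2 V) | IsPerfectMatching G M}, pmWeight w M

/-- The subgraph of `G` filtered by the vertex colouring `vc`, with respect to the
generalized edge-colouring `c` on darts (half-edges): it keeps exactly those edges
`{u, v}` of `G` whose dart at `u` is coloured `vc u` and whose dart at `v` is
coloured `vc v`. -/
def filtered {V : Type*} (G : SimpleGraph V) (c : G.Dart → ℕ) (vc : V → ℕ) :
    SimpleGraph V where
  Adj u v := ∃ h : G.Adj u v, c ⟨(u, v), h⟩ = vc u ∧ c ⟨(v, u), h.symm⟩ = vc v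
  symm := by
    constructor
    rintro u v ⟨h, h1, h2⟩
    exact ⟨h.symm, h2, h1⟩
  loopless := by
    constructor
    rintro v ⟨h, -⟩
    exact G.irrefl h

/-- The weight of a vertex colouring `vc`: the weight of the filtered subgraph. -/
noncomputable def vcWeight {V : Type*} (G : SimpleGraph V) (c : G.Dart → ℕ)
    (w : Sym2 V → ℂ) (vc : V → ℕ) : ℂ :=
  graphWeight (filtered G c vc) w

/-- The pair `(c, w)` of a generalized edge-colouring (on darts) and a weighting
is `k`-valid: all edge weights are nonzero, and there are `k` distinct colours such
that each of the `k` constant (monochromatic) vertex colourings with one of these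
colour values has weight `1`, and every other vertex colouring has weight `0`. -/
def IsKValid {V : Type*} (G : SimpleGraph V) (c : G.Dart → ℕ) (w : Sym2 V → ℂ)
    (k : ℕ) : Prop :=
  (∀ e ∈ G.edgeSet, w e ≠ 0) ∧
  ∃ S : Finset ℕ, S.card = k ∧
    (∀ i ∈ S, vcWeight G c w (fun _ => i) = 1) ∧
    ∀ vc : V → ℕ, (¬ ∃ i ∈ S, vc = fun _ => i) → vcWeight G c w vc = 0

/-- The weighted matching index `μ̄(G)`: the largest `k` for which some pair `(c, w)`
is `k`-valid (`0` if there is none). -/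
noncomputable def muBar {V : Type*} (G : SimpleGraph V) : ℕ :=
  sSup {k | ∃ (c : G.Dart → ℕ) (w : Sym2 V → ℂ), IsKValid G c w k}

/-! A constant vertex colouring `i` of nonzero weight forces a perfect matching of the filtered
graph, so every vertex `v` carries a dart coloured `i`; the `k` colours of a `k`-valid pair thus
need `k` distinct darts at `v`. On an empty vertex set every `k ≥ 1` is valid, so `muBar` is the
junk value `0` of `sSup` on an unbounded set of naturals. -/

section

variable {V : Type*}

theorem IsPerfectMatching.exists_adj {G : SimpleGraph V} {M : Set (Sym2 V)}
    (hM : IsPerfectMatching G M) (v : V) : ∃ u, G.Adj v u := by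
  obtain ⟨e, ⟨heM, hve⟩, -⟩ := hM.2 v
  have he : e ∈ G.edgeSet := hM.1 heM
  induction e using Sym2.ind with
  | _ a b =>
    rcases Sym2.mem_iff.mp hve with rfl | rfl
    · exact ⟨b, he⟩
    · exact ⟨a, G.adj_symm he⟩

theorem exists_isPerfectMatching_of_graphWeight_ne_zero {G : SimpleGraph V}
    {w : Sym2 V → ℂ} (h : graphWeight G w ≠ 0) : ∃ M, IsPerfectMatching G M := by
  by_contra! hnone
  have hempty : {M | IsPerfectMatching G M} = ∅ := Set.eq_empty_of_forall_notMem hnone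
  exact h (by rw [graphWeight, hempty, finsum_mem_empty])

theorem graphWeight_of_isEmpty [IsEmpty V] (G : SimpleGraph V) (w : Sym2 V → ℂ) :
    graphWeight G w = 1 := by
  have hpm : IsPerfectMatching G ∅ := ⟨Set.empty_subset _, isEmptyElim⟩
  have hsingleton : {M | IsPerfectMatching G M} = {∅} :=
    Set.subsingleton_of_subsingleton.eq_singleton_of_mem hpm
  rw [graphWeight, hsingleton, finsum_mem_singleton, pmWeight, finprod_mem_empty]

theorem exists_dart_eq_of_vcWeight_const_ne_zero {G : SimpleGraph V} {c : G.Dart → ℕ}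
    {w : Sym2 V → ℂ} {i : ℕ} (h : vcWeight G c w (fun _ => i) ≠ 0) (v : V) :
    ∃ d : G.Dart, d.fst = v ∧ c d = i := by
  obtain ⟨M, hM⟩ := exists_isPerfectMatching_of_graphWeight_ne_zero h
  obtain ⟨u, hadj, hcolour, -⟩ := hM.exists_adj v
  exact ⟨⟨(v, u), hadj⟩, rfl, hcolour⟩

theorem IsKValid.le_degree [Fintype V] {G : SimpleGraph V} [DecidableRel G.Adj]
    {c : G.Dart → ℕ} {w : Sym2 V → ℂ} {k : ℕ} (h : IsKValid G c w k) (v : V) :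
    k ≤ G.degree v := by
  classical
  obtain ⟨-, S, rfl, hS, -⟩ := h
  have hsub : S ⊆ ({d : G.Dart | d.fst = v} : Finset G.Dart).image c := by
    intro i hi
    have hne : vcWeight G c w (fun _ => i) ≠ 0 := by rw [hS i hi]; exact one_ne_zero
    obtain ⟨d, hd, hcd⟩ := exists_dart_eq_of_vcWeight_const_ne_zero hne v
    exact Finset.mem_image.mpr ⟨d, by simpa using hd, hcd⟩
  calc S.card ≤ _ := Finset.card_le_card hsub
    _ ≤ _ := Finset.card_image_le
    _ = G.degree v := G.dart_fst_fiber_card_eq_degree v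

theorem isKValid_of_isEmpty [IsEmpty V] (G : SimpleGraph V) (c : G.Dart → ℕ)
    (w : Sym2 V → ℂ) {k : ℕ} (hk : 1 ≤ k) : IsKValid G c w k :=
  ⟨fun e _ => isEmptyElim e, Finset.range k, Finset.card_range k,
    fun _ _ => graphWeight_of_isEmpty _ w,
    fun _ hvc => (hvc ⟨0, Finset.mem_range.mpr hk, Subsingleton.elim _ _⟩).elim⟩

theorem muBar_eq_zero_of_isEmpty [IsEmpty V] (G : SimpleGraph V) : muBar G = 0 := by
  have hinf : {k | ∃ (c : G.Dart → ℕ) (w : Sym2 V → ℂ), IsKValid G c w k}.Infinite :=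
    (Set.Ici_infinite 1).mono fun k hk =>
      ⟨fun _ => 0, 0, isKValid_of_isEmpty G _ 0 hk⟩
  exact Set.Infinite.Nat.sSup_eq_zero hinf

theorem muBar_le_minDegree [Fintype V] (G : SimpleGraph V) [DecidableRel G.Adj] :
    muBar G ≤ G.minDegree := by
  cases isEmpty_or_nonempty V
  · rw [muBar_eq_zero_of_isEmpty]
    exact Nat.zero_le _
  · refine csSup_le' ?_
    rintro k ⟨c, w, h⟩
    exact G.le_minDegree_of_forall_le_degree k h.le_degree

end

theorem statement_17_general {V : Type*} [Fintype V] (G : SimpleGraph V) [DecidableRel G.Adj]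
    (c : G.Dart → ℕ) (w : Sym2 V → ℂ) (k : ℕ)
    (h : IsKValid G c w k) :
    (∀ v : V, k ≤ G.degree v) ∧ muBar G ≤ G.minDegree :=
  ⟨h.le_degree, muBar_le_minDegree G⟩

theorem statement_17 {V : Type*} [Fintype V] (G : SimpleGraph V) [DecidableRel G.Adj]
    (c : G.Dart → ℕ) (w : Sym2 V → ℂ) (k : ℕ) (hk : 1 ≤ k)
    (h : IsKValid G c w k) :
    (∀ v : V, k ≤ G.degree v) ∧ muBar G ≤ G.minDegree :=
  statement_17_general G c w k h
end
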